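/- arXiv:2512.11100 — 4 statements merged into one kernel-verified Lean document; each statement's English description precedes it below -/
import Mathlib

section
/- In the DSS on a chain of L sites with an absorbing boundary at site L+1, start from any initial state consisting of a stable configuration z ∈ {0,1}^L together with an arbitrary finite collection of waiting particles on the sites. Then the stabilization process terminates almost surely, and the probability distribution of the final stable configuration in {0,1}^L does not depend on the order in which waiting particles are selected for evolution: any two rules for choosing which waiting particle to evolve next yield, upon iteration until no waiting particle remains, the same distribution on {0,1}^L. -/
namespace DSS

/-- A state of the DSS on `L` sites: a stable field `z : Fin L → Bool` together with a
finite multiset `w` of waiting particles (particles past site `L` have left the system). -/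
structure State (L : ℕ) where
  z : Fin L → Bool
  w : Multiset (Fin L)

variable {L : ℕ}

/-- The multiset holding the right neighbour of `x`; empty if the particle leaves the system. -/
def succSite (L : ℕ) (x : Fin L) : Multiset (Fin L) :=
  if h : x.val + 1 < L then {(⟨x.val + 1, h⟩ : Fin L)} else 0

/-- Evolution of a waiting particle at `x` when `z x = 1`: the waiting particle moves to
`x+1` and the stable particle at `x` becomes a waiting particle at `x`. -/
def topple (s : State L) (x : Fin L) : State L :=
  ⟨Function.update s.z x false, s.w + succSite L x⟩

/-- Evolution of a waiting particle at `x` when `z x = 0`, settling branch (probability p). -/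
def settle (s : State L) (x : Fin L) : State L :=
  ⟨Function.update s.z x true, s.w.erase x⟩

/-- Evolution of a waiting particle at `x` when `z x = 0`, jumping branch (probability q). -/
def jump (s : State L) (x : Fin L) : State L :=
  ⟨s.z, s.w.erase x + succSite L x⟩

/-- `stabilizeAux p q R n s c` is the probability that, evolving one waiting particle at a
time (the particle being selected by the rule `R`), the process started from `s` reaches
within `n` elementary steps a stable state whose stable field is `c`. -/
noncomputable def stabilizeAux (p q : ℝ) (R : State L → Option (Fin L)) :
    ℕ → State L → (Fin L → Bool) → ℝ
  | 0, s, c => if s.w = 0 ∧ s.z = c then 1 else 0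
  | n + 1, s, c =>
    match R s with
    | none => if s.z = c then 1 else 0
    | some x =>
      if s.z x then stabilizeAux p q R n (topple s x) c
      else p * stabilizeAux p q R n (settle s x) c
        + q * stabilizeAux p q R n (jump s x) c

/-- The canonical evolution rule: evolve the leftmost waiting particle. -/
def minRule (s : State L) : Option (Fin L) :=
  if h : s.w = 0 then none
  else some (s.w.toFinset.min'
    (Finset.nonempty_iff_ne_empty.mpr (by simpa [Multiset.toFinset_eq_empty] using h)))

/-- A termination measure: the stabilization process started from `s` ends after at most
`fuel s` elementary steps, whatever the rule and the randomness. -/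
def potential (s : State L) : ℕ :=
  (s.w.map fun x => L + 1 - x.val).sum + ∑ x : Fin L, (if s.z x then L + 1 - x.val else 0)

def fuel (s : State L) : ℕ := 2 * potential s + Multiset.card s.w

/-- Add one waiting particle at site `1` (index `0`). -/
def addGrain (r : Fin L → Bool) : State L :=
  ⟨r, if h : 0 < L then {(⟨0, h⟩ : Fin L)} else 0⟩

/-- The driven-dissipative transition kernel `W` of the DSS: add a particle at site 1 and
stabilize. -/
noncomputable def Wker (p q : ℝ) (r r' : Fin L → Bool) : ℝ :=
  stabilizeAux p q minRule (fuel (addGrain r)) (addGrain r) r'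

/-- `W` as a matrix on stable configurations. -/
noncomputable def Wmat (p q : ℝ) (L : ℕ) :
    Matrix (Fin L → Bool) (Fin L → Bool) ℝ :=
  Matrix.of fun r r' => Wker p q r r'

/-- The product Bernoulli(p) measure `ψ(r) = p^(Σ r) q^(L - Σ r)`. -/
noncomputable def psi (p q : ℝ) {L : ℕ} (r : Fin L → Bool) : ℝ :=
  p ^ (Finset.univ.filter fun x => r x = true).card *
    q ^ (L - (Finset.univ.filter fun x => r x = true).card)


/-- An evolution rule: in every state with at least one waiting particle it selects a site
carrying a waiting particle, and it selects nothing exactly on stable states. -/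
def IsRule {L : ℕ} (R : State L → Option (Fin L)) : Prop :=
  (∀ s : State L, R s = none ↔ s.w = 0) ∧
    (∀ (s : State L) (x : Fin L), R s = some x → x ∈ s.w)

/-! ### Auxiliary lemmas -/

lemma State.ext' {s t : State L} (h1 : s.z = t.z) (h2 : s.w = t.w) : s = t := by
  cases s; cases t; cases h1; cases h2; rfl

lemma succSite_sum (x : Fin L) :
    ((succSite L x).map fun y : Fin L => L + 1 - y.val).sum + x.val ≤ L := by
  have hx := x.isLt
  unfold succSite
  split <;> simp <;> omega

lemma succSite_card (x : Fin L) : Multiset.card (succSite L x) ≤ 1 := by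
  unfold succSite; split <;> simp

lemma zsum_update (z : Fin L → Bool) (x : Fin L) (b : Bool) :
    (∑ y : Fin L, if Function.update z x b y then L + 1 - y.val else 0)
      + (if z x then L + 1 - x.val else 0)
    = (∑ y : Fin L, if z y then L + 1 - y.val else 0)
      + (if b then L + 1 - x.val else 0) := by
  have h : (fun y : Fin L => if Function.update z x b y then L + 1 - y.val else 0)
      = Function.update (fun y : Fin L => if z y then L + 1 - y.val else 0) x
          (if b then L + 1 - x.val else 0) := by
    funext y
    rcases eq_or_ne y x with rfl | hy
    · simp
    · simp [Function.update_of_ne hy]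
  rw [h, Finset.sum_update_of_mem (Finset.mem_univ x),
    Finset.sum_eq_add_sum_sdiff_singleton_of_mem (Finset.mem_univ x)
      (fun y : Fin L => if z y then L + 1 - y.val else 0)]
  ring

lemma erase_sum {w : Multiset (Fin L)} {x : Fin L} (h : x ∈ w) :
    ((w.erase x).map fun y : Fin L => L + 1 - y.val).sum + (L + 1 - x.val)
      = (w.map fun y : Fin L => L + 1 - y.val).sum := by
  conv_rhs => rw [← Multiset.cons_erase h]
  simp [add_comm]

lemma fuel_topple_lt {s : State L} {x : Fin L} (h : s.z x = true) :
    fuel (topple s x) < fuel s := by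
  have hzt := zsum_update s.z x false
  have hss := succSite_sum x
  have hsc := succSite_card x
  have hx := x.isLt
  rw [h] at hzt
  simp only [if_true, Bool.false_eq_true, if_false] at hzt
  unfold fuel potential
  rw [show (topple s x).z = Function.update s.z x false from rfl]
  simp only [fuel, potential, topple, Multiset.map_add, Multiset.sum_add, Multiset.card_add]
  omega

lemma fuel_settle_lt {s : State L} {x : Fin L} (hx : x ∈ s.w) (h : s.z x = false) :
    fuel (settle s x) < fuel s := by
  have hzt := zsum_update s.z x true
  have hes := erase_sum hx
  have hce := Multiset.card_erase_add_one hx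
  have hxl := x.isLt
  rw [h] at hzt
  simp only [Bool.false_eq_true, if_false, if_true] at hzt
  unfold fuel potential
  rw [show (settle s x).z = Function.update s.z x true from rfl]
  simp only [fuel, potential, settle]
  omega

lemma fuel_jump_lt {s : State L} {x : Fin L} (hx : x ∈ s.w) :
    fuel (jump s x) < fuel s := by
  have hes := erase_sum hx
  have hss := succSite_sum x
  have hsc := succSite_card x
  have hce := Multiset.card_erase_add_one hx
  have hxl := x.isLt
  unfold fuel potential
  rw [show (jump s x).z = s.z from rfl]
  simp only [fuel, potential, jump, Multiset.map_add, Multiset.sum_add, Multiset.card_add]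
  omega

/-! ### Unfolding lemmas for `stabilizeAux` -/

variable {p q : ℝ} {R : State L → Option (Fin L)} {c : Fin L → Bool}

lemma stab_zero (s : State L) :
    stabilizeAux p q R 0 s c = if s.w = 0 ∧ s.z = c then 1 else 0 := rfl

lemma stab_succ_none {s : State L} (h : R s = none) (n : ℕ) :
    stabilizeAux p q R (n+1) s c = if s.z = c then 1 else 0 := by
  simp only [stabilizeAux, h]

lemma stab_succ_some {s : State L} {x : Fin L} (h : R s = some x) (n : ℕ) :
    stabilizeAux p q R (n+1) s c =
      if s.z x then stabilizeAux p q R n (topple s x) c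
      else p * stabilizeAux p q R n (settle s x) c
        + q * stabilizeAux p q R n (jump s x) c := by
  simp only [stabilizeAux, h]

lemma stab_stable (hR : IsRule R) {s : State L} (h : s.w = 0) (n : ℕ) :
    stabilizeAux p q R n s c = if s.z = c then 1 else 0 := by
  cases n with
  | zero => simp [stab_zero, h]
  | succ n => exact stab_succ_none ((hR.1 s).mpr h) n

lemma isRule_min : IsRule (minRule (L := L)) := by
  constructor
  · intro s; unfold minRule; split <;> simp_all
  · intro s x h
    unfold minRule at h
    split at h
    · exact absurd h (by simp)
    · rw [Option.some_inj] at h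
      rw [← h]
      exact Multiset.mem_toFinset.mp (s.w.toFinset.min'_mem _)

lemma fuel_pos {s : State L} (h : s.w ≠ 0) : 0 < fuel s := by
  have : 0 < Multiset.card s.w := Multiset.card_pos.mpr h
  unfold fuel; omega

lemma stab_fuel (hR : IsRule R) :
    ∀ n, ∀ s : State L, fuel s ≤ n →
      stabilizeAux p q R n s c = stabilizeAux p q R (fuel s) s c := by
  intro n
  induction n using Nat.strong_induction_on with
  | _ n IH =>
    intro s hs
    rcases eq_or_ne s.w 0 with hw | hw
    · rw [stab_stable hR hw, stab_stable hR hw]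
    · have hfs : 0 < fuel s := fuel_pos hw
      rcases eq_or_lt_of_le hs with h | hlt
      · rw [h]
      · obtain ⟨m, rfl⟩ : ∃ m, n = m + 1 := ⟨n - 1, by omega⟩
        obtain ⟨k, hk⟩ : ∃ k, fuel s = k + 1 := ⟨fuel s - 1, by omega⟩
        obtain ⟨x, hx⟩ : ∃ x, R s = some x := by
          rcases h : R s with _ | x
          · exact absurd ((hR.1 s).mp h) hw
          · exact ⟨x, rfl⟩
        have hxw : x ∈ s.w := hR.2 s x hx
        rw [hk, stab_succ_some hx, stab_succ_some hx]
        rcases hzx : s.z x with _ | _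
        · simp only [Bool.false_eq_true, if_false]
          have h1 : fuel (settle s x) < fuel s := fuel_settle_lt hxw hzx
          have h2 : fuel (jump s x) < fuel s := fuel_jump_lt hxw
          rw [IH m (by omega) (settle s x) (by omega),
              IH k (by omega) (settle s x) (by omega),
              IH m (by omega) (jump s x) (by omega),
              IH k (by omega) (jump s x) (by omega)]
        · simp only [if_true]
          have h1 : fuel (topple s x) < fuel s := fuel_topple_lt hzx
          rw [IH m (by omega) (topple s x) (by omega),
              IH k (by omega) (topple s x) (by omega)]

/-- The rule-independent stabilization value (defined via the canonical rule). -/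
noncomputable def Fval (p q : ℝ) (s : State L) (c : Fin L → Bool) : ℝ :=
  stabilizeAux p q minRule (fuel s) s c

/-- One-step evolution operator at site `x`. -/
noncomputable def Tp (p q : ℝ) (x : Fin L) (G : State L → ℝ) (s : State L) : ℝ :=
  if s.z x then G (topple s x) else p * G (settle s x) + q * G (jump s x)

lemma stab_eq_Fval (hR : IsRule R) {n : ℕ} {s : State L} (hs : fuel s ≤ n)
    (hmin : R = minRule) :
    stabilizeAux p q R n s c = Fval p q s c := by
  subst hmin; exact stab_fuel hR n s hs

lemma Fval_unfold {s : State L} {x : Fin L} (hx : minRule s = some x) :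
    Fval p q s c = Tp p q x (fun t => Fval p q t c) s := by
  have hxw : x ∈ s.w := isRule_min.2 s x hx
  have hw : s.w ≠ 0 := by rintro h0; rw [h0] at hxw; simp at hxw
  obtain ⟨k, hk⟩ : ∃ k, fuel s = k + 1 := ⟨fuel s - 1, by have := fuel_pos hw; omega⟩
  show stabilizeAux p q minRule (fuel s) s c = _
  rw [hk, stab_succ_some hx]
  unfold Tp
  rcases hzx : s.z x with _ | _
  · simp only [Bool.false_eq_true, if_false]
    have h1 : fuel (settle s x) < fuel s := fuel_settle_lt hxw hzx
    have h2 : fuel (jump s x) < fuel s := fuel_jump_lt hxw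
    rw [stab_fuel isRule_min k (settle s x) (by omega),
        stab_fuel isRule_min k (jump s x) (by omega)]
    rfl
  · simp only [if_true]
    have h1 : fuel (topple s x) < fuel s := fuel_topple_lt hzx
    rw [stab_fuel isRule_min k (topple s x) (by omega)]
    rfl

/-! ### Commutation of evolution operators -/

variable {s : State L} {x y : Fin L}

lemma mem_w_topple (hx : x ∈ s.w) : x ∈ (topple s y).w :=
  Multiset.mem_add.mpr (Or.inl hx)

lemma mem_w_settle (hxy : x ≠ y) (hx : x ∈ s.w) : x ∈ (settle s y).w :=
  (Multiset.mem_erase_of_ne hxy).mpr hx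

lemma mem_w_jump (hxy : x ≠ y) (hx : x ∈ s.w) : x ∈ (jump s y).w :=
  Multiset.mem_add.mpr (Or.inl ((Multiset.mem_erase_of_ne hxy).mpr hx))

lemma z_topple (hxy : x ≠ y) : (topple s y).z x = s.z x := Function.update_of_ne hxy _ _
lemma z_settle (hxy : x ≠ y) : (settle s y).z x = s.z x := Function.update_of_ne hxy _ _
lemma z_jump : (jump s y).z x = s.z x := rfl

lemma topple_topple (hxy : x ≠ y) : topple (topple s x) y = topple (topple s y) x :=
  State.ext' (Function.update_comm hxy _ _ _) (add_right_comm _ _ _)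

lemma settle_topple (hxy : x ≠ y) (hy : y ∈ s.w) :
    settle (topple s x) y = topple (settle s y) x :=
  State.ext' (Function.update_comm hxy _ _ _) (Multiset.erase_add_left_pos _ hy)

lemma jump_topple (hy : y ∈ s.w) : jump (topple s x) y = topple (jump s y) x :=
  State.ext' rfl (by
    show (s.w + succSite L x).erase y + succSite L y = s.w.erase y + succSite L y + succSite L x
    rw [Multiset.erase_add_left_pos _ hy, add_right_comm])

lemma settle_settle (hxy : x ≠ y) : settle (settle s x) y = settle (settle s y) x :=
  State.ext' (Function.update_comm hxy _ _ _) (Multiset.erase_comm _ _ _)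

lemma jump_settle (hxy : x ≠ y) (hx : x ∈ s.w) :
    jump (settle s x) y = settle (jump s y) x :=
  State.ext' rfl (by
    show (s.w.erase x).erase y + succSite L y = (s.w.erase y + succSite L y).erase x
    rw [Multiset.erase_add_left_pos _ ((Multiset.mem_erase_of_ne hxy).mpr hx),
      Multiset.erase_comm])

lemma jump_jump (hxy : x ≠ y) (hx : x ∈ s.w) (hy : y ∈ s.w) :
    jump (jump s x) y = jump (jump s y) x :=
  State.ext' rfl (by
    show (s.w.erase x + succSite L x).erase y + succSite L y
        = (s.w.erase y + succSite L y).erase x + succSite L x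
    rw [Multiset.erase_add_left_pos _ ((Multiset.mem_erase_of_ne hxy.symm).mpr hy),
      Multiset.erase_add_left_pos _ ((Multiset.mem_erase_of_ne hxy).mpr hx),
      Multiset.erase_comm, add_right_comm])

lemma Tp_comm (G : State L → ℝ) (hxy : x ≠ y) (hx : x ∈ s.w) (hy : y ∈ s.w) :
    Tp p q x (Tp p q y G) s = Tp p q y (Tp p q x G) s := by
  have hyx : y ≠ x := hxy.symm
  unfold Tp
  rcases hzx : s.z x with _ | _ <;> rcases hzy : s.z y with _ | _ <;>
    simp only [z_topple hxy, z_topple hyx, z_settle hxy, z_settle hyx, z_jump, hzx, hzy,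
      Bool.false_eq_true, if_false, if_true]
  · rw [settle_settle hxy, jump_settle hxy hx, jump_settle hyx hy, jump_jump hxy hx hy]
    ring
  · rw [settle_topple hyx hx, jump_topple hx]
  · rw [settle_topple hxy hy, jump_topple hy]
  · rw [topple_topple hxy]

lemma Tp_congr {G H : State L → ℝ}
    (h1 : s.z x = true → G (topple s x) = H (topple s x))
    (h2 : s.z x = false → G (settle s x) = H (settle s x))
    (h3 : s.z x = false → G (jump s x) = H (jump s x)) :
    Tp p q x G s = Tp p q x H s := by
  unfold Tp
  rcases h : s.z x with _ | _
  · simp only [Bool.false_eq_true, if_false]; rw [h2 h, h3 h]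
  · simp only [if_true]; rw [h1 h]

/-- The abelian property: `Fval` satisfies the one-step equation at *every* waiting site. -/
lemma Fval_step :
    ∀ N, ∀ s : State L, fuel s ≤ N → ∀ x ∈ s.w,
      Fval p q s c = Tp p q x (fun t => Fval p q t c) s := by
  intro N
  induction N using Nat.strong_induction_on with
  | _ N IH =>
    intro s hsN x hxw
    have hw : s.w ≠ 0 := fun h0 => by rw [h0] at hxw; simp at hxw
    obtain ⟨y, hy⟩ : ∃ y, minRule s = some y := by
      unfold minRule; rw [dif_neg hw]; exact ⟨_, rfl⟩
    have hyw : y ∈ s.w := isRule_min.2 s y hy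
    have hmain : Fval p q s c = Tp p q y (fun t => Fval p q t c) s := Fval_unfold hy
    rcases eq_or_ne x y with rfl | hxy
    · exact hmain
    have key : ∀ t : State L, fuel t < fuel s → ∀ z ∈ t.w,
        Fval p q t c = Tp p q z (fun u => Fval p q u c) t :=
      fun t ht z hz => IH (fuel t) (lt_of_lt_of_le ht hsN) t le_rfl z hz
    have h2 : Tp p q y (fun t => Fval p q t c) s
        = Tp p q y (Tp p q x (fun t => Fval p q t c)) s := by
      refine Tp_congr ?_ ?_ ?_
      · intro hzy; exact key (topple s y) (fuel_topple_lt hzy) x (mem_w_topple hxw)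
      · intro hzy; exact key (settle s y) (fuel_settle_lt hyw hzy) x (mem_w_settle hxy hxw)
      · intro _; exact key (jump s y) (fuel_jump_lt hyw) x (mem_w_jump hxy hxw)
    have h3 : Tp p q y (Tp p q x (fun t => Fval p q t c)) s
        = Tp p q x (Tp p q y (fun t => Fval p q t c)) s :=
      Tp_comm _ hxy.symm hyw hxw
    have h4 : Tp p q x (Tp p q y (fun t => Fval p q t c)) s
        = Tp p q x (fun t => Fval p q t c) s := by
      refine Tp_congr ?_ ?_ ?_
      · intro hzx
        exact (key (topple s x) (fuel_topple_lt hzx) y (mem_w_topple hyw)).symm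
      · intro hzx
        exact (key (settle s x) (fuel_settle_lt hxw hzx) y (mem_w_settle hxy.symm hyw)).symm
      · intro _
        exact (key (jump s x) (fuel_jump_lt hxw) y (mem_w_jump hxy.symm hyw)).symm
    rw [hmain, h2, h3, h4]

/-- Rule independence: any rule, run long enough, computes `Fval`. -/
lemma stab_eq_Fval_any (hR : IsRule R) :
    ∀ n, ∀ s : State L, fuel s ≤ n → stabilizeAux p q R n s c = Fval p q s c := by
  intro n
  induction n using Nat.strong_induction_on with
  | _ n IH =>
    intro s hs
    rcases eq_or_ne s.w 0 with hw | hw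
    · rw [stab_stable hR hw]
      exact (stab_stable isRule_min hw (fuel s)).symm
    · have hfs : 0 < fuel s := fuel_pos hw
      obtain ⟨m, rfl⟩ : ∃ m, n = m + 1 := ⟨n - 1, by omega⟩
      obtain ⟨x, hx⟩ : ∃ x, R s = some x := by
        rcases h : R s with _ | x
        · exact absurd ((hR.1 s).mp h) hw
        · exact ⟨x, rfl⟩
      have hxw : x ∈ s.w := hR.2 s x hx
      rw [stab_succ_some hx, Fval_step (fuel s) s le_rfl x hxw]
      show Tp p q x (fun t => stabilizeAux p q R m t c) s = Tp p q x (fun t => Fval p q t c) s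
      refine Tp_congr ?_ ?_ ?_
      · intro hzx
        exact IH m (by omega) (topple s x)
          (by have := fuel_topple_lt (s := s) hzx; omega)
      · intro hzx
        exact IH m (by omega) (settle s x)
          (by have := fuel_settle_lt hxw hzx; omega)
      · intro _
        exact IH m (by omega) (jump s x)
          (by have := fuel_jump_lt (s := s) hxw; omega)

lemma stab_nonneg (hp : 0 ≤ p) (hq : 0 ≤ q) :
    ∀ n, ∀ s : State L, 0 ≤ stabilizeAux p q R n s c := by
  intro n
  induction n with
  | zero => intro s; rw [stab_zero]; split <;> norm_num
  | succ n IH =>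
    intro s
    rcases h : R s with _ | x
    · rw [stab_succ_none h]; split <;> norm_num
    · rw [stab_succ_some h]
      split
      · exact IH _
      · have h1 := IH (settle s x)
        have h2 := IH (jump s x)
        positivity

lemma stab_sum_one (hR : IsRule R) (hpq : p + q = 1) :
    ∀ n, ∀ s : State L, fuel s ≤ n →
      ∑ c : Fin L → Bool, stabilizeAux p q R n s c = 1 := by
  intro n
  induction n using Nat.strong_induction_on with
  | _ n IH =>
    intro s hs
    rcases eq_or_ne s.w 0 with hw | hw
    · rw [Finset.sum_congr rfl fun c _ => stab_stable (c := c) hR hw n]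
      simp
    · have hfs : 0 < fuel s := fuel_pos hw
      obtain ⟨m, rfl⟩ : ∃ m, n = m + 1 := ⟨n - 1, by omega⟩
      obtain ⟨x, hx⟩ : ∃ x, R s = some x := by
        rcases h : R s with _ | x
        · exact absurd ((hR.1 s).mp h) hw
        · exact ⟨x, rfl⟩
      have hxw : x ∈ s.w := hR.2 s x hx
      rw [Finset.sum_congr rfl fun c _ => stab_succ_some (c := c) hx m]
      rcases hzx : s.z x with _ | _
      · simp only [hzx, Bool.false_eq_true, if_false]
        rw [Finset.sum_add_distrib, ← Finset.mul_sum, ← Finset.mul_sum,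
          IH m (by omega) (settle s x) (by have := fuel_settle_lt hxw hzx; omega),
          IH m (by omega) (jump s x) (by have := fuel_jump_lt (s := s) hxw; omega),
          mul_one, mul_one, hpq]
      · simp only [hzx, if_true]
        exact IH m (by omega) (topple s x) (by have := fuel_topple_lt (s := s) hzx; omega)


/-- starting from any state (a stable configuration together with an arbitrary
finite collection of waiting particles), the stabilization process terminates almost surely,
and the law `μ` of the final stable configuration does not depend on the evolution rule. -/
theorem dss_stabilization_terminates_and_is_abelian
    (L : ℕ) (hL : 0 < L) (p q : ℝ) (hp : 0 < p) (hq : 0 < q) (hpq : p + q = 1)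
    (s : State L) :
    ∃ μ : (Fin L → Bool) → ℝ,
      (∀ c : Fin L → Bool, 0 ≤ μ c) ∧ (∑ c : Fin L → Bool, μ c = 1) ∧
      ∀ R : State L → Option (Fin L), IsRule R →
        ∀ c : Fin L → Bool,
          Filter.Tendsto (fun n => stabilizeAux p q R n s c) Filter.atTop (nhds (μ c)) := by
  refine ⟨fun c => Fval p q s c, fun c => stab_nonneg hp.le hq.le (fuel s) s, ?_, ?_⟩
  · exact stab_sum_one isRule_min hpq (fuel s) s le_rfl
  · intro R hR c
    exact Filter.Tendsto.congr'
      (Filter.eventually_atTop.mpr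
        ⟨fuel s, fun n hn => (stab_eq_Fval_any hR n s hn).symm⟩)
      tendsto_const_nhds


end DSS
end

section
/- For all integers y, τ ∈ ℤ and x ≥ 0, the free-walk probability satisfies: if |y−τ| ≤ x then P^free(y|τ,x) = Σ_{n=0}^{⌊(x−|y−τ|)/2⌋} α^{|y−τ|+2n} β^{x−|y−τ|−2n} · x! / ((|y−τ|+n)! · n! · (x−|y−τ|−2n)!), and if |y−τ| > x then P^free(y|τ,x) = 0. -/
namespace RW

/-- Free random walk: `Pfree α β τ x y` is the probability that a walk started at `τ`,
making steps `+1`, `-1` (probability `α` each) and `0` (probability `β`), is at `y`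
after `x` time steps. -/
noncomputable def Pfree (α β : ℝ) (τ : ℤ) : ℕ → ℤ → ℝ
  | 0, y => if y = τ then 1 else 0
  | x + 1, y => α * Pfree α β τ x (y - 1) + α * Pfree α β τ x (y + 1) + β * Pfree α β τ x y

/-- Absorbed random walk: `Pabs α β τ x y` is the probability that the walk started at
`τ ≥ 1`, with an absorbing wall at height `0`, is at `y` after `x` time steps (being at `0`
means having been absorbed before or at time `x`). -/
noncomputable def Pabs (α β : ℝ) (τ : ℕ) : ℕ → ℕ → ℝ
  | 0, y => if y = τ then 1 else 0
  | x + 1, 0 => α * Pabs α β τ x 1 + Pabs α β τ x 0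
  | x + 1, 1 => α * Pabs α β τ x 2 + β * Pabs α β τ x 1
  | x + 1, (y + 2) =>
      α * Pabs α β τ x (y + 1) + α * Pabs α β τ x (y + 3) + β * Pabs α β τ x (y + 2)

/-- The error function `erf z = (2/√π) ∫_0^z e^(-t²) dt`. -/
noncomputable def erf (z : ℝ) : ℝ :=
  2 / Real.sqrt Real.pi * ∫ t in (0:ℝ)..z, Real.exp (-t ^ 2)


def trin (x k n : ℕ) : ℕ := Nat.choose x (k + n) * Nat.choose (x - (k + n)) n

lemma trin_eq_zero {x k n : ℕ} (h : x < k + 2 * n) : trin x k n = 0 := by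
  unfold trin
  rcases lt_or_ge x (k + n) with h1 | h1
  · rw [Nat.choose_eq_zero_of_lt h1, zero_mul]
  · rw [Nat.choose_eq_zero_of_lt (show x - (k + n) < n by omega), mul_zero]

lemma choose_mul_choose_symm (x a b : ℕ) :
    Nat.choose x a * Nat.choose (x - a) b = Nat.choose x b * Nat.choose (x - b) a := by
  rcases le_or_gt (a + b) x with h | h
  · have h1 := Nat.choose_mul (n := x) (k := a + b) (s := a) (Nat.le_add_right a b)
    have h2 := Nat.choose_mul (n := x) (k := a + b) (s := b) (Nat.le_add_left b a)
    rw [Nat.add_sub_cancel_left] at h1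
    rw [Nat.add_sub_cancel] at h2
    rw [← h1, ← h2, Nat.choose_symm_add]
  · have z1 : Nat.choose x a * Nat.choose (x - a) b = 0 := by
      rcases le_or_gt a x with ha | ha
      · rw [Nat.choose_eq_zero_of_lt (show x - a < b by omega), mul_zero]
      · rw [Nat.choose_eq_zero_of_lt ha, zero_mul]
    have z2 : Nat.choose x b * Nat.choose (x - b) a = 0 := by
      rcases le_or_gt b x with hb | hb
      · rw [Nat.choose_eq_zero_of_lt (show x - b < a by omega), mul_zero]
      · rw [Nat.choose_eq_zero_of_lt hb, zero_mul]
    rw [z1, z2]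

lemma trin_succ_succ (x k n : ℕ) :
    trin (x + 1) (k + 1) (n + 1) = trin x k (n + 1) + trin x (k + 2) n + trin x (k + 1) (n + 1) := by
  unfold trin
  have e1 : k + 1 + (n + 1) = (k + n + 1) + 1 := by ring
  have e2 : k + (n + 1) = k + n + 1 := by ring
  have e3 : k + 2 + n = k + n + 2 := by ring
  have e4 : x + 1 - (k + n + 1 + 1) = x - (k + n + 1) := by omega
  rw [e1, e2, e3, Nat.choose_succ_succ, e4]
  simp only [Nat.succ_eq_add_one]
  have key : Nat.choose x (k + n + 1 + 1) * Nat.choose (x - (k + n + 1)) (n + 1) =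
      Nat.choose x (k + n + 2) * Nat.choose (x - (k + n + 2)) n +
      Nat.choose x (k + n + 2) * Nat.choose (x - (k + n + 2)) (n + 1) := by
    rcases le_or_gt (k + n + 2) x with h | h
    · have e5 : x - (k + n + 1) = (x - (k + n + 2)) + 1 := by omega
      have e6 : k + n + 1 + 1 = k + n + 2 := by ring
      rw [e5, e6, Nat.choose_succ_succ, Nat.mul_add]
    · have e6 : k + n + 1 + 1 = k + n + 2 := by ring
      rw [e6, Nat.choose_eq_zero_of_lt h]; ring
  rw [add_mul, key]; ring

lemma trin_zero_succ (x n : ℕ) :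
    trin (x + 1) 0 (n + 1) = 2 * trin x 1 n + trin x 0 (n + 1) := by
  unfold trin
  have e1 : (0:ℕ) + (n + 1) = n + 1 := by ring
  have e2 : (1:ℕ) + n = n + 1 := by ring
  have e3 : x + 1 - (n + 1) = x - n := by omega
  rw [e1, e2, e3, Nat.choose_succ_succ]
  simp only [Nat.succ_eq_add_one]
  have sym : Nat.choose x n * Nat.choose (x - n) (n + 1) =
      Nat.choose x (n + 1) * Nat.choose (x - (n + 1)) n := choose_mul_choose_symm x n (n + 1)
  have key : Nat.choose x (n + 1) * Nat.choose (x - n) (n + 1) =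
      Nat.choose x (n + 1) * Nat.choose (x - (n + 1)) n +
      Nat.choose x (n + 1) * Nat.choose (x - (n + 1)) (n + 1) := by
    rcases le_or_gt (n + 1) x with h | h
    · have e5 : x - n = (x - (n + 1)) + 1 := by omega
      rw [e5, Nat.choose_succ_succ, Nat.mul_add]
    · rw [Nat.choose_eq_zero_of_lt h]; ring
  rw [add_mul, sym, key]; ring

noncomputable def tm (α β : ℝ) (x k n : ℕ) : ℝ :=
  α ^ (k + 2 * n) * β ^ (x - k - 2 * n) * (trin x k n : ℝ)

lemma tm_eq_zero {α β : ℝ} {x k n : ℕ} (h : x < k + 2 * n) : tm α β x k n = 0 := by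
  rw [tm, trin_eq_zero h, Nat.cast_zero, mul_zero]

lemma trin_succ_zero (x k : ℕ) : trin (x + 1) (k + 1) 0 = trin x k 0 + trin x (k + 1) 0 := by
  unfold trin
  simp [Nat.choose_succ_succ]

lemma trin_n_zero (x k : ℕ) : trin x k 0 = Nat.choose x k := by
  simp [trin]

lemma tm_succ_succ (α β : ℝ) (x k n : ℕ) :
    tm α β (x + 1) (k + 1) (n + 1) =
      α * tm α β x k (n + 1) + α * tm α β x (k + 2) n + β * tm α β x (k + 1) (n + 1) := by
  rcases le_or_gt (k + 2 * n + 3) x with h | h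
  · rw [tm, tm, tm, tm, trin_succ_succ]
    push_cast
    rw [show x - (k + 2) - 2 * n = x - k - 2 * (n + 1) by omega,
        show x - k - 2 * (n + 1) = (x - (k + 1) - 2 * (n + 1)) + 1 by omega]
    ring
  · rw [tm, tm, tm, tm, trin_succ_succ, trin_eq_zero (show x < (k + 1) + 2 * (n + 1) by omega)]
    push_cast
    rw [show x - (k + 2) - 2 * n = x - k - 2 * (n + 1) by omega]
    ring

lemma tm_zero_succ (α β : ℝ) (x n : ℕ) :
    tm α β (x + 1) 0 (n + 1) =
      α * tm α β x 1 n + α * tm α β x 1 n + β * tm α β x 0 (n + 1) := by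
  rcases le_or_gt (2 * n + 2) x with h | h
  · rw [tm, tm, tm, trin_zero_succ]
    push_cast
    rw [show x + 1 - 2 * (n + 1) = x - 1 - 2 * n by omega,
        show x - 1 - 2 * n = (x - 0 - 2 * (n + 1)) + 1 by omega]
    ring
  · rw [tm, tm, tm, trin_zero_succ, trin_eq_zero (show x < 0 + 2 * (n + 1) by omega)]
    push_cast
    rw [show x + 1 - 2 * (n + 1) = x - 1 - 2 * n by omega]
    ring

lemma tm_succ_zero (α β : ℝ) (x k : ℕ) :
    tm α β (x + 1) (k + 1) 0 = α * tm α β x k 0 + β * tm α β x (k + 1) 0 := by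
  rcases le_or_gt (k + 1) x with h | h
  · rw [tm, tm, tm, trin_succ_zero]
    push_cast
    rw [show x - k - 0 = (x - (k + 1) - 0) + 1 by omega]
    ring
  · rw [tm, tm, tm, trin_succ_zero, trin_eq_zero (show x < (k + 1) + 2 * 0 by omega)]
    push_cast
    ring

lemma tm_zero_zero (α β : ℝ) (x : ℕ) : tm α β (x + 1) 0 0 = β * tm α β x 0 0 := by
  simp [tm, trin, pow_succ]
  ring

noncomputable def S (α β : ℝ) (x k : ℕ) : ℝ := ∑ n ∈ Finset.range (x + 2), tm α β x k n

lemma S_eq_sum {α β : ℝ} {x k R : ℕ} (h : x + 2 ≤ R) :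
    S α β x k = ∑ n ∈ Finset.range R, tm α β x k n := by
  rw [S]
  apply Finset.sum_subset (Finset.range_subset_range.2 h)
  intro n _ hn
  rw [Finset.mem_range] at hn
  exact tm_eq_zero (by omega)

lemma S_succ_succ (α β : ℝ) (x k : ℕ) :
    S α β (x + 1) (k + 1) = α * S α β x k + α * S α β x (k + 2) + β * S α β x (k + 1) := by
  rw [show S α β (x+1) (k+1) = ∑ n ∈ Finset.range (x + 2 + 1), tm α β (x+1) (k+1) n from
        S_eq_sum (by omega),
      show S α β x k = ∑ n ∈ Finset.range (x + 2 + 1), tm α β x k n from S_eq_sum (by omega),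
      show S α β x (k+2) = ∑ n ∈ Finset.range (x + 2 + 1), tm α β x (k+2) n from
        S_eq_sum (by omega),
      show S α β x (k+1) = ∑ n ∈ Finset.range (x + 2 + 1), tm α β x (k+1) n from
        S_eq_sum (by omega)]
  rw [Finset.sum_range_succ' (tm α β (x+1) (k+1)) (x+2),
      Finset.sum_range_succ' (tm α β x k) (x+2),
      Finset.sum_range_succ (tm α β x (k+2)) (x+2),
      Finset.sum_range_succ' (tm α β x (k+1)) (x+2)]
  have hsum : ∑ n ∈ Finset.range (x+2), tm α β (x+1) (k+1) (n+1)
      = ∑ n ∈ Finset.range (x+2),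
          (α * tm α β x k (n+1) + α * tm α β x (k+2) n + β * tm α β x (k+1) (n+1)) :=
    Finset.sum_congr rfl fun n _ => tm_succ_succ α β x k n
  rw [hsum, tm_succ_zero, tm_eq_zero (show x < (k+2) + 2*(x+2) by omega)]
  simp only [Finset.sum_add_distrib, ← Finset.mul_sum]
  ring

lemma S_succ_zero (α β : ℝ) (x : ℕ) :
    S α β (x + 1) 0 = α * S α β x 1 + α * S α β x 1 + β * S α β x 0 := by
  rw [show S α β (x+1) 0 = ∑ n ∈ Finset.range (x + 2 + 1), tm α β (x+1) 0 n from
        S_eq_sum (by omega),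
      show S α β x 1 = ∑ n ∈ Finset.range (x + 2 + 1), tm α β x 1 n from S_eq_sum (by omega),
      show S α β x 0 = ∑ n ∈ Finset.range (x + 2 + 1), tm α β x 0 n from S_eq_sum (by omega)]
  rw [Finset.sum_range_succ' (tm α β (x+1) 0) (x+2),
      Finset.sum_range_succ (tm α β x 1) (x+2),
      Finset.sum_range_succ' (tm α β x 0) (x+2)]
  have hsum : ∑ n ∈ Finset.range (x+2), tm α β (x+1) 0 (n+1)
      = ∑ n ∈ Finset.range (x+2),
          (α * tm α β x 1 n + α * tm α β x 1 n + β * tm α β x 0 (n+1)) :=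
    Finset.sum_congr rfl fun n _ => tm_zero_succ α β x n
  rw [hsum, tm_zero_zero, tm_eq_zero (show x < 1 + 2*(x+2) by omega)]
  simp only [Finset.sum_add_distrib, ← Finset.mul_sum]
  ring

lemma S_zero_eval (α β : ℝ) (k : ℕ) : S α β 0 k = if k = 0 then 1 else 0 := by
  rcases k with _ | k
  · rw [S, if_pos rfl]
    rw [show (0:ℕ) + 2 = 1 + 1 from rfl, Finset.sum_range_succ, Finset.sum_range_succ,
        Finset.sum_range_zero, tm_eq_zero (show 0 < 0 + 2 * 1 by omega)]
    simp [tm, trin]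
  · rw [S, if_neg (Nat.succ_ne_zero k)]
    exact Finset.sum_eq_zero fun n _ => tm_eq_zero (by omega)

lemma pfree_eq (α β : ℝ) (τ : ℤ) : ∀ (x : ℕ) (y : ℤ),
    Pfree α β τ x y = S α β x (y - τ).natAbs := by
  intro x
  induction x with
  | zero =>
    intro y
    rw [Pfree, S_zero_eval]
    by_cases h : y = τ
    · rw [if_pos h, if_pos (by omega)]
    · rw [if_neg h, if_neg (by omega)]
  | succ x ih =>
    intro y
    rw [Pfree, ih, ih, ih]
    have e1 : y - 1 - τ = (y - τ) - 1 := by ring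
    have e2 : y + 1 - τ = (y - τ) + 1 := by ring
    rw [e1, e2]
    rcases lt_trichotomy (y - τ) 0 with h | h | h
    · obtain ⟨k, hk⟩ : ∃ k : ℕ, y - τ = -((k : ℤ) + 1) := ⟨(-(y - τ) - 1).toNat, by omega⟩
      rw [show (y - τ - 1).natAbs = k + 2 by omega, show (y - τ + 1).natAbs = k by omega,
          show (y - τ).natAbs = k + 1 by omega, S_succ_succ]
      ring
    · rw [show (y - τ - 1).natAbs = 1 by omega, show (y - τ + 1).natAbs = 1 by omega,
          show (y - τ).natAbs = 0 by omega, S_succ_zero]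
    · obtain ⟨k, hk⟩ : ∃ k : ℕ, y - τ = (k : ℤ) + 1 := ⟨(y - τ - 1).toNat, by omega⟩
      rw [show (y - τ - 1).natAbs = k by omega, show (y - τ + 1).natAbs = k + 2 by omega,
          show (y - τ).natAbs = k + 1 by omega, S_succ_succ]

lemma trin_cast (x k n : ℕ) (h : k + 2 * n ≤ x) :
    (trin x k n : ℝ) = (Nat.factorial x : ℝ) /
      ((Nat.factorial (k + n) : ℝ) * (Nat.factorial n : ℝ) *
        (Nat.factorial (x - k - 2 * n) : ℝ)) := by
  rw [trin]
  push_cast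
  rw [Nat.cast_choose ℝ (show k + n ≤ x by omega),
      Nat.cast_choose ℝ (show n ≤ x - (k + n) by omega),
      show x - (k + n) - n = x - k - 2 * n by omega]
  have h1 : (Nat.factorial (k + n) : ℝ) ≠ 0 := Nat.cast_ne_zero.mpr (Nat.factorial_ne_zero _)
  have h2 : (Nat.factorial n : ℝ) ≠ 0 := Nat.cast_ne_zero.mpr (Nat.factorial_ne_zero _)
  have h3 : (Nat.factorial (x - k - 2 * n) : ℝ) ≠ 0 :=
    Nat.cast_ne_zero.mpr (Nat.factorial_ne_zero _)
  have h4 : (Nat.factorial (x - (k + n)) : ℝ) ≠ 0 :=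
    Nat.cast_ne_zero.mpr (Nat.factorial_ne_zero _)
  field_simp


/-- explicit formula for the free-walk probabilities. -/
theorem pfree_explicit_formula
    (p q : ℝ) (hp : 0 < p) (hq : 0 < q) (hpq : p + q = 1) (τ y : ℤ) (x : ℕ) :
    ((y - τ).natAbs ≤ x →
      Pfree (p * q) (1 - 2 * (p * q)) τ x y =
        ∑ n ∈ Finset.range ((x - (y - τ).natAbs) / 2 + 1),
          (p * q) ^ ((y - τ).natAbs + 2 * n) *
            (1 - 2 * (p * q)) ^ (x - (y - τ).natAbs - 2 * n) *
            ((Nat.factorial x : ℝ) /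
              ((Nat.factorial ((y - τ).natAbs + n) : ℝ) * (Nat.factorial n : ℝ) *
                (Nat.factorial (x - (y - τ).natAbs - 2 * n) : ℝ)))) ∧
    (x < (y - τ).natAbs → Pfree (p * q) (1 - 2 * (p * q)) τ x y = 0) := by
  set k := (y - τ).natAbs with hk
  constructor
  · intro h
    rw [pfree_eq, ← hk, S]
    rw [show (∑ n ∈ Finset.range (x + 2), tm (p * q) (1 - 2 * (p * q)) x k n)
          = ∑ n ∈ Finset.range ((x - k) / 2 + 1), tm (p * q) (1 - 2 * (p * q)) x k n from
        (Finset.sum_subset (Finset.range_subset_range.2 (by omega))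
          (fun n _ hn => tm_eq_zero (by rw [Finset.mem_range] at hn; omega))).symm]
    refine Finset.sum_congr rfl fun n hn => ?_
    rw [Finset.mem_range] at hn
    rw [tm, trin_cast x k n (by omega)]
  · intro h
    rw [pfree_eq, ← hk]
    exact Finset.sum_eq_zero fun n _ => tm_eq_zero (by omega)

end RW
end

section
/- For all integers τ ≥ 1 and x ≥ 0, the absorption probability of the absorbed walk satisfies P(0|τ,x) = 1 − Σ_{y=1}^{2τ} P^free(y|τ,x). -/
namespace RW

lemma pfree_zero (α β : ℝ) (τ y : ℤ) : Pfree α β τ 0 y = if y = τ then 1 else 0 := rfl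

lemma pfree_succ (α β : ℝ) (τ : ℤ) (x : ℕ) (y : ℤ) :
    Pfree α β τ (x + 1) y =
      α * Pfree α β τ x (y - 1) + α * Pfree α β τ x (y + 1) + β * Pfree α β τ x y := rfl

lemma pfree_symm (α β : ℝ) (τ : ℤ) (x : ℕ) (y : ℤ) :
    Pfree α β τ x y = Pfree α β τ x (2 * τ - y) := by
  induction x generalizing y with
  | zero =>
    rw [pfree_zero, pfree_zero]
    exact if_congr (by omega) rfl rfl
  | succ x ih =>
    rw [pfree_succ, pfree_succ, ih (y - 1), ih (y + 1), ih y,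
      show 2 * τ - (y - 1) = (2 * τ - y) + 1 by ring,
      show 2 * τ - (y + 1) = (2 * τ - y) - 1 by ring]
    ring

lemma pabs_reflect (α β : ℝ) (τ : ℕ) (hτ : 1 ≤ τ) (x : ℕ) :
    ∀ y : ℕ, 1 ≤ y →
      Pabs α β τ x y = Pfree α β (τ : ℤ) x (y : ℤ) - Pfree α β (τ : ℤ) x (-(y : ℤ)) := by
  induction x with
  | zero =>
    intro y hy
    show (if y = τ then (1:ℝ) else 0) = _
    rw [pfree_zero, pfree_zero, if_neg (by omega : ¬(-(y:ℤ) = (τ:ℤ)))]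
    simp [Nat.cast_inj]
  | succ x ih =>
    intro y hy
    match y, hy with
    | 1, _ =>
      show α * Pabs α β τ x 2 + β * Pabs α β τ x 1 = _
      rw [ih 2 (by omega), ih 1 (by omega), pfree_succ, pfree_succ]
      norm_num
      ring
    | (z + 2), _ =>
      show α * Pabs α β τ x (z + 1) + α * Pabs α β τ x (z + 3) + β * Pabs α β τ x (z + 2) = _
      rw [ih (z + 1) (by omega), ih (z + 2) (by omega), ih (z + 3) (by omega),
        pfree_succ, pfree_succ]
      push_cast
      rw [show ((z:ℤ) + 2) - 1 = (z:ℤ) + 1 by ring,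
        show ((z:ℤ) + 2) + 1 = (z:ℤ) + 3 by ring,
        show -((z:ℤ) + 2) - 1 = -((z:ℤ) + 3) by ring,
        show -((z:ℤ) + 2) + 1 = -((z:ℤ) + 1) by ring]
      ring

lemma shift_sum (F : ℤ → ℝ) (n : ℕ) :
    ∑ i ∈ Finset.range n, F (i : ℤ) =
      (∑ i ∈ Finset.range n, F ((i : ℤ) + 1)) + F 0 - F (n : ℤ) := by
  have h1 := Finset.sum_range_succ' (fun i : ℕ => F (i : ℤ)) n
  have h2 := Finset.sum_range_succ (fun i : ℕ => F (i : ℤ)) n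
  simp only [Nat.cast_add, Nat.cast_one, Nat.cast_zero] at h1 h2
  linarith

/-- the absorption probability in terms of the free walk:
`P(0|τ,x) = 1 - Σ_{y=1}^{2τ} P^free(y|τ,x)`. -/
theorem absorption_probability_via_free_walk
    (p q : ℝ) (hp : 0 < p) (hq : 0 < q) (hpq : p + q = 1)
    (τ : ℕ) (hτ : 1 ≤ τ) (x : ℕ) :
    Pabs (p * q) (1 - 2 * (p * q)) τ x 0 =
      1 - ∑ y ∈ Finset.Icc 1 (2 * τ),
        Pfree (p * q) (1 - 2 * (p * q)) (τ : ℤ) x (y : ℤ) := by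
  set α := p * q with hα
  set β := 1 - 2 * (p * q) with hβ
  -- rewrite the sum over Icc as a sum over range
  have hIcc : ∀ (f : ℕ → ℝ), ∑ y ∈ Finset.Icc 1 (2 * τ), f y
      = ∑ i ∈ Finset.range (2 * τ), f (1 + i) := by
    intro f
    rw [← Finset.Ico_add_one_right_eq_Icc, Finset.sum_Ico_eq_sum_range]
    simp
  induction x with
  | zero =>
    rw [show Pabs α β τ 0 0 = (if 0 = τ then (1:ℝ) else 0) from rfl, if_neg (by omega)]
    have : ∑ y ∈ Finset.Icc 1 (2 * τ), Pfree α β (τ : ℤ) 0 (y : ℤ)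
        = ∑ y ∈ Finset.Icc 1 (2 * τ), (if y = τ then (1:ℝ) else 0) := by
      refine Finset.sum_congr rfl fun y _ => ?_
      rw [pfree_zero]
      exact if_congr (by exact_mod_cast Iff.rfl) rfl rfl
    rw [this, Finset.sum_ite_eq' _ τ (fun _ => (1:ℝ)),
      if_pos (by simp [Finset.mem_Icc]; omega)]
    norm_num
  | succ x ihx =>
    have key : ∀ k : ℤ, Pfree α β (τ:ℤ) x k = Pfree α β (τ:ℤ) x (2*(τ:ℤ) - k) :=
      pfree_symm α β (τ:ℤ) x
    set F : ℤ → ℝ := fun k => Pfree α β (τ:ℤ) x k with hF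
    have hS1 : ∑ y ∈ Finset.Icc 1 (2 * τ), Pfree α β (τ : ℤ) (x+1) (y : ℤ)
        = ∑ i ∈ Finset.range (2*τ), (α * F ((i:ℤ)) + α * F ((i:ℤ)+2) + β * F ((i:ℤ)+1)) := by
      rw [hIcc (fun y => Pfree α β (τ : ℤ) (x+1) (y : ℤ))]
      refine Finset.sum_congr rfl fun i _ => ?_
      rw [pfree_succ]
      push_cast
      rw [show (1:ℤ) + (i:ℤ) - 1 = (i:ℤ) by ring, show (1:ℤ) + (i:ℤ) + 1 = (i:ℤ) + 2 by ring,
        show (1:ℤ) + (i:ℤ) = (i:ℤ) + 1 by ring]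
    have hS : ∑ y ∈ Finset.Icc 1 (2 * τ), Pfree α β (τ : ℤ) x (y : ℤ)
        = ∑ i ∈ Finset.range (2*τ), F ((i:ℤ)+1) := by
      rw [hIcc (fun y => Pfree α β (τ : ℤ) x (y : ℤ))]
      refine Finset.sum_congr rfl fun i _ => ?_
      simp [hF, add_comm]
    have hA := shift_sum F (2*τ)
    have hB := shift_sum (fun k => F (k+1)) (2*τ)
    -- symmetry facts
    have s1 : F 0 = F (2 * (τ:ℤ)) := by
      have h := key 0
      rw [show 2 * (τ:ℤ) - 0 = 2 * (τ:ℤ) by ring] at h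
      exact h
    have s2 : F (2 * (τ:ℤ) + 1) = F (-1) := by
      have h := key (2 * (τ:ℤ) + 1)
      rw [show 2 * (τ:ℤ) - (2 * (τ:ℤ) + 1) = -1 by ring] at h
      exact h
    have he : ∀ i : ℕ, F ((i:ℤ) + 1 + 1) = F ((i:ℤ) + 2) := fun i => by
      rw [show ((i:ℤ) + 1 + 1) = (i:ℤ) + 2 by ring]
    simp only [he] at hB
    rw [show F (0 + 1) = F 1 from by norm_num] at hB
    push_cast at hA hB ⊢
    show α * Pabs α β τ x 1 + Pabs α β τ x 0 = _
    rw [ihx, pabs_reflect α β τ hτ x 1 (by omega), hS1, hS]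
    rw [Finset.sum_add_distrib, Finset.sum_add_distrib, ← Finset.mul_sum, ← Finset.mul_sum,
      ← Finset.mul_sum, hβ]
    push_cast
    linear_combination α * hA - α * hB + α * s1 + α * s2

end RW
end

section
/- Finite-time decorrelation of scalar observables: for any function A: {0,1}^L → ℝ, any t ≥ 0 and any τ ≥ L, in the stationary process of the DSS one has E[A(z^t) A(z^{t+τ})] = E[A(z^t)] · E[A(z^{t+τ})]. -/
namespace DSS

variable {L : ℕ}

namespace DSSProof

noncomputable def wt (p q : ℝ) (b : Bool) : ℝ := if b then p else q

noncomputable def avK (p q : ℝ) {L : ℕ} : (x : ℕ) → (a : ℕ) → (z c : Fin L → Bool) → ℝ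
  | x, a, z, c =>
    if h : x < L then
      if a = 0 then (if z = c then 1 else 0)
      else p * avK p q (x+1) (a + (if z ⟨x,h⟩ then 1 else 0) - 1) (Function.update z ⟨x,h⟩ true) c
        + q * avK p q (x+1) (a + (if z ⟨x,h⟩ then 1 else 0)) (Function.update z ⟨x,h⟩ false) c
    else (if z = c then 1 else 0)
  termination_by x a z c => L - x
  decreasing_by all_goals omega

lemma avK_of_ge' (p q : ℝ) {L x : ℕ} {a : ℕ} (h : ¬ x < L) (z c : Fin L → Bool) :
    avK p q x a z c = (if z = c then 1 else 0) := by
  rw [avK]; simp [h]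

lemma avK_zero' (p q : ℝ) {L : ℕ} (x : ℕ) (z c : Fin L → Bool) :
    avK p q x 0 z c = (if z = c then 1 else 0) := by
  rw [avK]; split <;> simp

lemma avK_succ' (p q : ℝ) {L : ℕ} {x a : ℕ} (h : x < L) (ha : a ≠ 0) (z c : Fin L → Bool) :
    avK p q x a z c
      = p * avK p q (x+1) (a + (if z ⟨x,h⟩ then 1 else 0) - 1) (Function.update z ⟨x,h⟩ true) c
        + q * avK p q (x+1) (a + (if z ⟨x,h⟩ then 1 else 0)) (Function.update z ⟨x,h⟩ false) c := by
  conv_lhs => rw [avK]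
  simp [h, ha]

/-- like `avK` but also records (in `e`) whether the carry is nonzero upon reaching
site `M`. Only meaningful for `x ≤ M ≤ L`. -/
noncomputable def avT (p q : ℝ) {L : ℕ} (M : ℕ) : (x : ℕ) → (a : ℕ) → (z c : Fin L → Bool) →
    (e : Bool) → ℝ
  | x, a, z, c, e =>
    if x = M then (if e = decide (a ≠ 0) then avK p q x a z c else 0)
    else if h : x < L then
      if a = 0 then (if z = c ∧ e = false then 1 else 0)
      else p * avT p q M (x+1) (a + (if z ⟨x,h⟩ then 1 else 0) - 1) (Function.update z ⟨x,h⟩ true) c e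
        + q * avT p q M (x+1) (a + (if z ⟨x,h⟩ then 1 else 0)) (Function.update z ⟨x,h⟩ false) c e
    else (if z = c ∧ e = false then 1 else 0)
  termination_by x a z c e => L - x
  decreasing_by all_goals omega

variable {L : ℕ} {p q : ℝ}

/-- G1 : avK splits as the sum of the two flag values. -/
lemma avK_eq_avT_add (p q : ℝ) (M : ℕ) :
    ∀ x a (z c : Fin L → Bool), x ≤ M →
      avK p q x a z c = avT p q M x a z c true + avT p q M x a z c false
  | x, a, z, c, hxM => by
    rw [avT, avT]
    by_cases hM : x = M
    · simp only [hM, if_pos rfl]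
      rcases Nat.eq_zero_or_pos a with ha | ha
      · simp [ha, hM]
      · simp [Nat.pos_iff_ne_zero.mp ha, hM]
    · have hx : x < M := lt_of_le_of_ne hxM hM
      simp only [if_neg hM]
      split
      · rcases Nat.eq_zero_or_pos a with ha | ha
        · subst ha
          rw [avK_zero']
          simp
        · have ha' : a ≠ 0 := Nat.pos_iff_ne_zero.mp ha
          rw [if_neg ha', if_neg ha']
          rw [avK]
          simp only [dif_pos ‹x < L›, if_neg ha']
          rw [avK_eq_avT_add p q M (x+1) _ _ c hx,
              avK_eq_avT_add p q M (x+1) _ _ c hx]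
          ring
      · rw [avK]
        simp only [dif_neg ‹¬ x < L›]
        by_cases hzc : z = c <;> simp [hzc]
  termination_by x a z c => L - x
  decreasing_by all_goals omega

end DSSProof

namespace DSSProof2
open DSSProof

variable {L : ℕ} {p q : ℝ}

lemma castSucc_mk {x : ℕ} (h : x < L) :
    (⟨x, h.trans (Nat.lt_succ_self L)⟩ : Fin (L+1)) = Fin.castSucc ⟨x, h⟩ := rfl

lemma init_apply (z : Fin (L+1) → Bool) {x : ℕ} (h : x < L) :
    Fin.init z ⟨x, h⟩ = z ⟨x, h.trans (Nat.lt_succ_self L)⟩ := rfl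

lemma init_update (z : Fin (L+1) → Bool) {x : ℕ} (h : x < L) (b : Bool) :
    Fin.init (Function.update z ⟨x, h.trans (Nat.lt_succ_self L)⟩ b)
      = Function.update (Fin.init z) ⟨x, h⟩ b := by
  funext i
  rw [Fin.init]
  rcases eq_or_ne i ⟨x, h⟩ with rfl | hi
  · rw [castSucc_mk h, Function.update_self, Function.update_self]
  · rw [Function.update_of_ne hi, Function.update_of_ne (by
      simp only [castSucc_mk h, ne_eq, Fin.castSucc_inj]; exact hi), Fin.init]

lemma update_last (z : Fin (L+1) → Bool) {x : ℕ} (h : x < L) (b : Bool) :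
    Function.update z ⟨x, h.trans (Nat.lt_succ_self L)⟩ b (Fin.last L) = z (Fin.last L) := by
  rw [castSucc_mk h, Function.update_of_ne (Fin.castSucc_lt_last _).ne']

lemma init_update_last (z : Fin (L+1) → Bool) (b : Bool) :
    Fin.init (Function.update z (Fin.last L) b) = Fin.init z := by
  funext i
  rw [Fin.init, Fin.init, Function.update_of_ne (Fin.castSucc_lt_last _).ne]

lemma eq_iff_init_last {z c : Fin (L+1) → Bool} :
    z = c ↔ (Fin.init z = Fin.init c ∧ z (Fin.last L) = c (Fin.last L)) := by
  constructor
  · rintro rfl; exact ⟨rfl, rfl⟩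
  · rintro ⟨h1, h2⟩
    funext i
    rcases Fin.eq_castSucc_or_eq_last i with ⟨j, rfl⟩ | rfl
    · exact congrFun h1 j
    · exact h2

lemma indicator_factor (z c : Fin (L+1) → Bool) :
    (if z = c then (1:ℝ) else 0)
      = (if c (Fin.last L) = z (Fin.last L) then 1 else 0)
          * (if Fin.init z = Fin.init c then 1 else 0) := by
  by_cases h2 : c (Fin.last L) = z (Fin.last L)
  · by_cases h1 : Fin.init z = Fin.init c
    · have hzc : z = c := eq_iff_init_last.mpr ⟨h1, h2.symm⟩
      simp [hzc, h1, h2]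
    · have hzc : z ≠ c := fun h => h1 (by rw [h])
      simp [hzc, h1, h2]
  · have hzc : z ≠ c := fun h => h2 (by rw [h])
    simp [hzc, h2]

/-- G2, dying branch. -/
lemma avT_false_factor :
    ∀ x a (z c : Fin (L+1) → Bool), x ≤ L →
      avT p q L x a z c false
        = (if c (Fin.last L) = z (Fin.last L) then 1 else 0)
            * avT (L := L) p q L x a (Fin.init z) (Fin.init c) false
  | x, a, z, c, hx => by
    rw [avT, avT]
    rcases eq_or_lt_of_le hx with rfl | hxL
    · simp only [if_pos rfl]
      rcases Nat.eq_zero_or_pos a with rfl | ha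
      · rw [avK_of_ge' p q (lt_irrefl x), avK_zero']
        simp only [ne_eq, not_true_eq_false, decide_not, if_pos rfl]
        norm_num
        rw [indicator_factor z c]
        rw [mul_comm, mul_ite, mul_one, mul_zero]
        split <;> split <;> simp_all
      · have hd : decide (a ≠ 0) = true := by simp [Nat.pos_iff_ne_zero.mp ha]
        simp [hd]
    · have hM : x ≠ L := hxL.ne
      have hxL1 : x < L + 1 := hxL.trans (Nat.lt_succ_self L)
      simp only [if_neg hM, dif_pos hxL1, dif_pos hxL]
      rcases Nat.eq_zero_or_pos a with rfl | ha
      · simp only [if_pos rfl, and_true]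
        norm_num
        rw [indicator_factor z c]
        rw [mul_comm, mul_ite, mul_one, mul_zero]
        split <;> split <;> simp_all
      · have ha' : a ≠ 0 := Nat.pos_iff_ne_zero.mp ha
        simp only [if_neg ha']
        have hz : z ⟨x, hxL1⟩ = Fin.init z ⟨x, hxL⟩ := rfl
        have e1 : (⟨x, hxL1⟩ : Fin (L+1)) = ⟨x, hxL.trans (Nat.lt_succ_self L)⟩ := rfl
        rw [e1,
          avT_false_factor (x+1) _ (Function.update z _ true) c (by omega),
          avT_false_factor (x+1) _ (Function.update z _ false) c (by omega),
          init_update z hxL, init_update z hxL, update_last z hxL, update_last z hxL, hz]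
        ring
  termination_by x a z c => L - x
  decreasing_by all_goals omega



lemma update_last_indicator (z c : Fin (L+1) → Bool) (b : Bool) :
    (if Function.update z (Fin.last L) b = c then (1:ℝ) else 0)
      = (if Fin.init z = Fin.init c then 1 else 0) * (if c (Fin.last L) = b then 1 else 0) := by
  have h : Function.update z (Fin.last L) b = c ↔ (Fin.init z = Fin.init c ∧ c (Fin.last L) = b) := by
    rw [eq_iff_init_last, init_update_last, Function.update_self]
    exact and_congr Iff.rfl eq_comm
  by_cases h1 : Fin.init z = Fin.init c <;> by_cases h2 : c (Fin.last L) = b <;>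
    simp [h, h1, h2]

/-- G2, exiting branch. -/
lemma avT_true_factor :
    ∀ x a (z c : Fin (L+1) → Bool), x ≤ L →
      avT p q L x a z c true
        = wt p q (c (Fin.last L)) * avT (L := L) p q L x a (Fin.init z) (Fin.init c) true
  | x, a, z, c, hx => by
    rw [avT, avT]
    rcases eq_or_lt_of_le hx with rfl | hxL
    · simp only [if_pos rfl]
      rcases Nat.eq_zero_or_pos a with rfl | ha
      · norm_num
      · have ha' : a ≠ 0 := Nat.pos_iff_ne_zero.mp ha
        have hd : decide (a ≠ 0) = true := by simp [ha']
        rw [hd, if_pos rfl, if_pos rfl, avK_of_ge' p q (lt_irrefl x)]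
        rw [avK]
        simp only [dif_pos (Nat.lt_succ_self x), if_neg ha']
        have hlast : (⟨x, Nat.lt_succ_self x⟩ : Fin (x+1)) = Fin.last x := rfl
        rw [hlast,
          avK_of_ge' p q (lt_irrefl (x+1)), avK_of_ge' p q (lt_irrefl (x+1)),
          update_last_indicator, update_last_indicator]
        cases hc : c (Fin.last x) <;> simp [wt, hc] <;> ring
    · have hM : x ≠ L := hxL.ne
      have hxL1 : x < L + 1 := hxL.trans (Nat.lt_succ_self L)
      simp only [if_neg hM, dif_pos hxL1, dif_pos hxL]
      rcases Nat.eq_zero_or_pos a with rfl | ha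
      · norm_num
      · have ha' : a ≠ 0 := Nat.pos_iff_ne_zero.mp ha
        simp only [if_neg ha']
        have hz : z ⟨x, hxL1⟩ = Fin.init z ⟨x, hxL⟩ := rfl
        have e1 : (⟨x, hxL1⟩ : Fin (L+1)) = ⟨x, hxL.trans (Nat.lt_succ_self L)⟩ := rfl
        rw [e1,
          avT_true_factor (x+1) _ (Function.update z _ true) c (by omega),
          avT_true_factor (x+1) _ (Function.update z _ false) c (by omega),
          init_update z hxL, init_update z hxL, hz]
        ring
  termination_by x a z c => L - x
  decreasing_by all_goals omega

end DSSProof2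

namespace DSSProof2
open DSSProof
variable {L : ℕ} {p q : ℝ}

/-- number of occupied sites -/
def S {L : ℕ} (z : Fin L → Bool) : ℕ := ∑ y : Fin L, (if z y then 1 else 0)

lemma S_update (z : Fin L → Bool) (x : Fin L) (b : Bool) :
    S (Function.update z x b) + (if z x then 1 else 0) = S z + (if b then 1 else 0) := by
  have h : (fun y => if Function.update z x b y then (1:ℕ) else 0)
      = Function.update (fun y => if z y then (1:ℕ) else 0) x (if b then 1 else 0) := by
    funext y
    rcases eq_or_ne y x with rfl | hy
    · simp
    · simp [Function.update_of_ne hy]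
  rw [S, h, Finset.sum_update_of_mem (Finset.mem_univ x)]
  rw [S, ← Finset.add_sum_erase _ _ (Finset.mem_univ x), Finset.erase_eq]
  ring

lemma S_le (z : Fin L → Bool) : S z ≤ L := by
  calc S z ≤ ∑ _y : Fin L, 1 := Finset.sum_le_sum (fun y _ => by split <;> simp)
  _ = L := by simp

lemma avK_nonneg' (hp : 0 ≤ p) (hq : 0 ≤ q) :
    ∀ x a (z c : Fin L → Bool), 0 ≤ avK p q x a z c
  | x, a, z, c => by
    rw [avK]
    split
    · split
      · positivity
      · have h1 := avK_nonneg' hp hq (x+1) (a + (if z ⟨x,‹_›⟩ then 1 else 0) - 1)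
          (Function.update z ⟨x,‹_›⟩ true) c
        have h2 := avK_nonneg' hp hq (x+1) (a + (if z ⟨x,‹_›⟩ then 1 else 0))
          (Function.update z ⟨x,‹_›⟩ false) c
        positivity
    · positivity
  termination_by x a z c => L - x
  decreasing_by all_goals omega

lemma avT_nonneg (hp : 0 ≤ p) (hq : 0 ≤ q) (M : ℕ) :
    ∀ x a (z c : Fin L → Bool) (e : Bool), 0 ≤ avT p q M x a z c e
  | x, a, z, c, e => by
    rw [avT]
    split
    · split
      · exact avK_nonneg' hp hq _ _ _ _
      · positivity
    · split
      · split
        · positivity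
        · have h1 := avT_nonneg hp hq M (x+1) (a + (if z ⟨x,‹_›⟩ then 1 else 0) - 1)
            (Function.update z ⟨x,‹_›⟩ true) c e
          have h2 := avT_nonneg hp hq M (x+1) (a + (if z ⟨x,‹_›⟩ then 1 else 0))
            (Function.update z ⟨x,‹_›⟩ false) c e
          positivity
      · positivity
  termination_by x a z c e => L - x
  decreasing_by all_goals omega

/-- G4 : a dying avalanche increases the particle count by exactly the carry. -/
lemma avT_false_card :
    ∀ x a (z c : Fin L → Bool), x ≤ L → avT p q L x a z c false ≠ 0 → S c = S z + a
  | x, a, z, c, hx, hne => by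
    rw [avT] at hne
    rcases eq_or_lt_of_le hx with rfl | hxL
    · rw [if_pos rfl] at hne
      rcases Nat.eq_zero_or_pos a with rfl | ha
      · rw [avK_zero'] at hne
        simp only [ne_eq, not_true_eq_false, decide_not] at hne
        norm_num at hne
        simp [hne]
      · have hd : decide (a ≠ 0) = true := by simp [Nat.pos_iff_ne_zero.mp ha]
        rw [hd] at hne
        simp at hne
    · have hM : x ≠ L := hxL.ne
      rw [if_neg hM, dif_pos hxL] at hne
      rcases Nat.eq_zero_or_pos a with rfl | ha
      · rw [if_pos rfl] at hne
        split at hne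
        · rename_i hzc
          norm_num at hzc
          simp [hzc]
        · simp at hne
      · have ha' : a ≠ 0 := Nat.pos_iff_ne_zero.mp ha
        rw [if_neg ha'] at hne
        have hcase : avT p q L (x+1) (a + (if z ⟨x,hxL⟩ then 1 else 0) - 1)
              (Function.update z ⟨x,hxL⟩ true) c false ≠ 0
            ∨ avT p q L (x+1) (a + (if z ⟨x,hxL⟩ then 1 else 0))
              (Function.update z ⟨x,hxL⟩ false) c false ≠ 0 := by
          by_contra hcon
          push_neg at hcon
          rw [hcon.1, hcon.2] at hne
          simp at hne
        have hS1 := S_update z ⟨x,hxL⟩ true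
        have hS2 := S_update z ⟨x,hxL⟩ false
        rcases hcase with hc | hc
        · have := avT_false_card (x+1) _ _ c (by omega) hc
          rw [this]
          by_cases hzx : z ⟨x,hxL⟩ <;> simp [hzx] at hS1 ⊢ <;> omega
        · have := avT_false_card (x+1) _ _ c (by omega) hc
          rw [this]
          by_cases hzx : z ⟨x,hxL⟩ <;> simp [hzx] at hS2 ⊢ <;> omega
  termination_by x a z c => L - x
  decreasing_by all_goals omega

end DSSProof2

namespace DSSProof2
open DSSProof
variable {L : ℕ} {p q : ℝ}

/-- snoc equivalence -/
def snocEquiv (L : ℕ) : ((Fin L → Bool) × Bool) ≃ (Fin (L+1) → Bool) where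
  toFun gb := Fin.snoc gb.1 gb.2
  invFun m := (Fin.init m, m (Fin.last L))
  left_inv gb := by simp [Fin.init_snoc, Fin.snoc_last]
  right_inv m := by simp [Fin.snoc_init_self]

lemma sum_snoc (f : (Fin (L+1) → Bool) → ℝ) :
    ∑ m : Fin (L+1) → Bool, f m = ∑ g : Fin L → Bool, ∑ b : Bool, f (Fin.snoc g b) := by
  rw [← Equiv.sum_comp (snocEquiv L) f, Fintype.sum_prod_type]
  rfl

lemma init_snoc' (g : Fin L → Bool) (b : Bool) : Fin.init (Fin.snoc g b : Fin (L+1) → Bool) = g := by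
  funext i
  simp [Fin.init, Fin.snoc_castSucc]

lemma last_snoc' (g : Fin L → Bool) (b : Bool) :
    (Fin.snoc g b : Fin (L+1) → Bool) (Fin.last L) = b := by
  simp [Fin.snoc_last]

/-- the product Bernoulli weight -/
noncomputable def psiprod (p q : ℝ) {L : ℕ} (c : Fin L → Bool) : ℝ := ∏ x : Fin L, wt p q (c x)

lemma psiprod_snoc (g : Fin L → Bool) (b : Bool) :
    psiprod p q (Fin.snoc g b) = psiprod p q g * wt p q b := by
  rw [psiprod, Fin.prod_univ_castSucc]
  congr 1
  · exact Finset.prod_congr rfl (fun x _ => by rw [Fin.snoc_castSucc])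
  · rw [Fin.snoc_last]

lemma sum_wt (hpq : p + q = 1) : ∑ b : Bool, wt p q b = 1 := by
  simpa [wt, add_comm] using hpq

lemma sum_psiprod (hpq : p + q = 1) : ∀ L, ∑ c : Fin L → Bool, psiprod p q c = 1
  | 0 => by simp [psiprod]
  | (L+1) => by
    rw [sum_snoc]
    have : ∀ g : Fin L → Bool, ∑ b : Bool, psiprod p q (Fin.snoc g b)
        = psiprod p q g := by
      intro g
      simp only [psiprod_snoc, ← Finset.mul_sum, sum_wt hpq, mul_one]
    rw [Finset.sum_congr rfl (fun g _ => this g), sum_psiprod hpq L]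

/-- the avalanche transition matrix -/
noncomputable def Wm (p q : ℝ) (L : ℕ) : Matrix (Fin L → Bool) (Fin L → Bool) ℝ :=
  Matrix.of fun r c => avK p q 0 1 r c

noncomputable def Nm (p q : ℝ) (L : ℕ) : Matrix (Fin L → Bool) (Fin L → Bool) ℝ :=
  Matrix.of fun r c => avT p q L 0 1 r c false

noncomputable def Rm (p q : ℝ) (L : ℕ) : Matrix (Fin L → Bool) (Fin L → Bool) ℝ :=
  Matrix.of fun r c => avT p q L 0 1 r c true

noncomputable def Ntop (p q : ℝ) (L : ℕ) : Matrix (Fin (L+1) → Bool) (Fin (L+1) → Bool) ℝ :=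
  Matrix.of fun r c => (if c (Fin.last L) = r (Fin.last L) then 1 else 0)
    * Nm p q L (Fin.init r) (Fin.init c)

noncomputable def Rtop (p q : ℝ) (L : ℕ) : Matrix (Fin (L+1) → Bool) (Fin (L+1) → Bool) ℝ :=
  Matrix.of fun r c => wt p q (c (Fin.last L)) * Rm p q L (Fin.init r) (Fin.init c)

lemma Wm_eq_add : Wm p q L = Rm p q L + Nm p q L := by
  ext r c
  exact avK_eq_avT_add p q L 0 1 r c (Nat.zero_le L)

lemma Wm_succ_eq_add : Wm p q (L+1) = Rtop p q L + Ntop p q L := by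
  ext r c
  rw [Wm, Matrix.of_apply, avK_eq_avT_add p q L 0 1 r c (Nat.zero_le L),
    avT_true_factor 0 1 r c (Nat.zero_le L), avT_false_factor 0 1 r c (Nat.zero_le L)]
  rfl

/-- telescoping by the last `A`-step -/
lemma telescope {n : ℕ} {R : Type*} [Ring R] (A B : R) :
    (A + B)^n = B^n + ∑ j ∈ Finset.range n, (A+B)^j * A * B^(n-1-j) := by
  induction n with
  | zero => simp
  | succ n ih =>
    rw [pow_succ, mul_add]
    nth_rewrite 2 [ih]
    rw [add_mul, ← pow_succ, Finset.sum_mul]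
    have h1 : ∀ j ∈ Finset.range n, (A+B)^j * A * B^(n-1-j) * B = (A+B)^j * A * B^(n-j) := by
      intro j hj
      rw [mul_assoc, ← pow_succ]
      congr 2
      rw [Finset.mem_range] at hj
      omega
    rw [Finset.sum_congr rfl h1, Finset.sum_range_succ]
    have h2 : ∀ j ∈ Finset.range n, (A+B)^j * A * B^(n+1-1-j) = (A+B)^j * A * B^(n-j) := by
      intro j hj
      congr 2
    have h3 : (A+B)^n * A * B^(n+1-1-n) = (A+B)^n * A := by
      rw [show n+1-1-n = 0 by omega, pow_zero, mul_one]
    rw [Finset.sum_congr rfl h2, h3]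
    abel

end DSSProof2

namespace DSSProof2
open DSSProof
variable {L : ℕ} {p q : ℝ}

lemma sum_bool_wt (hpq : p + q = 1) (g : Bool → ℝ) :
    ∑ b : Bool, wt p q b * g b = p * g true + q * g false := by
  simp [wt]

lemma Nm_nonneg (hp : 0 ≤ p) (hq : 0 ≤ q) (r c : Fin L → Bool) : 0 ≤ Nm p q L r c :=
  avT_nonneg hp hq L 0 1 r c false

lemma Nm_pow_nonneg (hp : 0 ≤ p) (hq : 0 ≤ q) (k : ℕ) (r c : Fin L → Bool) :
    0 ≤ ((Nm p q L)^k) r c := by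
  induction k generalizing r c with
  | zero =>
    rw [pow_zero, Matrix.one_apply]
    split <;> norm_num
  | succ k ih =>
    rw [pow_succ, Matrix.mul_apply]
    exact Finset.sum_nonneg fun m _ => mul_nonneg (ih r m) (Nm_nonneg hp hq m c)

lemma Nm_pow_card (hp : 0 ≤ p) (hq : 0 ≤ q) (k : ℕ) (r c : Fin L → Bool)
    (hne : ((Nm p q L)^k) r c ≠ 0) : S c = S r + k := by
  induction k generalizing r c with
  | zero =>
    rw [pow_zero, Matrix.one_apply] at hne
    split at hne
    · subst ‹r = c›; simp
    · simp at hne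
  | succ k ih =>
    rw [pow_succ, Matrix.mul_apply] at hne
    obtain ⟨m, -, hm⟩ := Finset.exists_ne_zero_of_sum_ne_zero hne
    have h1 : ((Nm p q L)^k) r m ≠ 0 := fun h => hm (by rw [h, zero_mul])
    have h2 : Nm p q L m c ≠ 0 := fun h => hm (by rw [h, mul_zero])
    have := avT_false_card 0 1 m c (Nat.zero_le L) h2
    rw [this, ih r m h1]
    omega

lemma Nm_pow_eq_zero (hp : 0 ≤ p) (hq : 0 ≤ q) {k : ℕ} (hk : L + 1 ≤ k) :
    (Nm p q L)^k = 0 := by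
  ext r c
  rw [Matrix.zero_apply]
  by_contra hne
  have := Nm_pow_card hp hq k r c hne
  have := S_le c
  have := S_le (L := L) r
  omega

lemma Ntop_pow (k : ℕ) (r c : Fin (L+1) → Bool) :
    ((Ntop p q L)^k) r c
      = (if c (Fin.last L) = r (Fin.last L) then 1 else 0)
          * ((Nm p q L)^k) (Fin.init r) (Fin.init c) := by
  induction k generalizing r c with
  | zero =>
    rw [pow_zero, pow_zero, Matrix.one_apply]
    rw [show (if r = c then (1:ℝ) else 0) = (if c (Fin.last L) = r (Fin.last L) then 1 else 0)
        * (if Fin.init r = Fin.init c then 1 else 0) from indicator_factor r c]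
    rw [Matrix.one_apply]
  | succ k ih =>
    rw [pow_succ, pow_succ, Matrix.mul_apply, Matrix.mul_apply,
      sum_snoc (f := fun m => ((Ntop p q L)^k) r m * Ntop p q L m c)]
    have hterm : ∀ g : Fin L → Bool, ∀ b : Bool,
        ((Ntop p q L)^k) r (Fin.snoc g b) * Ntop p q L (Fin.snoc g b) c
          = ((if b = r (Fin.last L) then 1 else 0) * ((Nm p q L)^k) (Fin.init r) g)
            * ((if c (Fin.last L) = b then 1 else 0) * Nm p q L g (Fin.init c)) := by
      intro g b
      rw [ih, Ntop, Matrix.of_apply, init_snoc', last_snoc']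
    rw [Finset.sum_congr rfl fun g _ => Finset.sum_congr rfl fun b _ => hterm g b]
    rw [Finset.mul_sum]
    refine Finset.sum_congr rfl fun g _ => ?_
    rw [Fintype.sum_bool]
    by_cases h1 : c (Fin.last L) = r (Fin.last L) <;>
      cases hr : r (Fin.last L) <;> simp [h1, hr] at * <;> simp [h1, hr] <;> ring

lemma marg1 (hpq : p + q = 1) (u : Fin (L+1) → Bool) (f : (Fin L → Bool) → ℝ) :
    ∑ m : Fin (L+1) → Bool, Wm p q (L+1) u m * f (Fin.init m)
      = ∑ g : Fin L → Bool, Wm p q L (Fin.init u) g * f g := by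
  rw [sum_snoc (f := fun m => Wm p q (L+1) u m * f (Fin.init m))]
  refine Finset.sum_congr rfl fun g _ => ?_
  have hterm : ∀ b : Bool, Wm p q (L+1) u (Fin.snoc g b) * f (Fin.init (Fin.snoc g b : Fin (L+1) → Bool))
      = (wt p q b * Rm p q L (Fin.init u) g
        + (if b = u (Fin.last L) then 1 else 0) * Nm p q L (Fin.init u) g) * f g := by
    intro b
    rw [Wm_succ_eq_add, Matrix.add_apply, Rtop, Ntop, Matrix.of_apply, Matrix.of_apply,
      init_snoc', last_snoc']
  rw [Fintype.sum_bool, hterm, hterm, Wm_eq_add, Matrix.add_apply]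
  cases hu : u (Fin.last L) <;> simp [wt, hu] <;> ring_nf <;>
    rw [show (q:ℝ) = 1 - p by linarith] <;> ring

lemma marg (hpq : p + q = 1) (j : ℕ) (r : Fin (L+1) → Bool) (f : (Fin L → Bool) → ℝ) :
    ∑ m : Fin (L+1) → Bool, ((Wm p q (L+1))^j) r m * f (Fin.init m)
      = ∑ g : Fin L → Bool, ((Wm p q L)^j) (Fin.init r) g * f g := by
  induction j generalizing f r with
  | zero =>
    simp only [pow_zero, Matrix.one_apply, ite_mul, one_mul, zero_mul]
    rw [Finset.sum_ite_eq, Finset.sum_ite_eq]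
    simp
  | succ j ih =>
    rw [pow_succ]
    have e1 : ∀ m, ((Wm p q (L+1))^j * Wm p q (L+1)) r m
        = ∑ u, ((Wm p q (L+1))^j) r u * Wm p q (L+1) u m := fun m => Matrix.mul_apply
    rw [Finset.sum_congr rfl fun m _ => by rw [e1 m, Finset.sum_mul]]
    rw [Finset.sum_comm]
    have e2 : ∀ u, ∑ m : Fin (L+1) → Bool, ((Wm p q (L+1))^j) r u * Wm p q (L+1) u m * f (Fin.init m)
        = ((Wm p q (L+1))^j) r u * ∑ g, Wm p q L (Fin.init u) g * f g := by
      intro u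
      rw [← marg1 hpq u f, Finset.mul_sum]
      exact Finset.sum_congr rfl fun m _ => by ring
    rw [Finset.sum_congr rfl fun u _ => e2 u,
      ih r (fun v => ∑ g, Wm p q L v g * f g)]
    have e3 : ∀ x : Fin L → Bool, ((Wm p q L)^(j+1)) (Fin.init r) x * f x
        = ∑ v, ((Wm p q L)^j) (Fin.init r) v * Wm p q L v x * f x := by
      intro x
      rw [pow_succ, Matrix.mul_apply, Finset.sum_mul]
    rw [Finset.sum_congr rfl fun x _ => e3 x, Finset.sum_comm]
    refine Finset.sum_congr rfl fun g _ => ?_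
    rw [Finset.mul_sum]
    exact Finset.sum_congr rfl fun v _ => by ring

lemma RtopNtop_pow (k : ℕ) (r c : Fin (L+1) → Bool) :
    (Rtop p q L * (Ntop p q L)^k) r c
      = wt p q (c (Fin.last L)) * ((Rm p q L * (Nm p q L)^k)) (Fin.init r) (Fin.init c) := by
  rw [Matrix.mul_apply, sum_snoc (f := fun m => Rtop p q L r m * ((Ntop p q L)^k) m c),
    Matrix.mul_apply, Finset.mul_sum]
  refine Finset.sum_congr rfl fun g _ => ?_
  have hterm : ∀ b : Bool, Rtop p q L r (Fin.snoc g b) * ((Ntop p q L)^k) (Fin.snoc g b) c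
      = (wt p q b * Rm p q L (Fin.init r) g)
        * ((if c (Fin.last L) = b then 1 else 0) * ((Nm p q L)^k) g (Fin.init c)) := by
    intro b
    rw [Ntop_pow, Rtop, Matrix.of_apply, init_snoc', last_snoc']
  rw [Fintype.sum_bool, hterm, hterm]
  cases hc : c (Fin.last L) <;> simp [wt, hc] <;> ring

lemma term_eq (hpq : p + q = 1) (j k : ℕ) (r c : Fin (L+1) → Bool) :
    ((Wm p q (L+1))^j * (Rtop p q L * (Ntop p q L)^k)) r c
      = wt p q (c (Fin.last L))
          * (((Wm p q L)^j * (Rm p q L * (Nm p q L)^k))) (Fin.init r) (Fin.init c) := by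
  rw [Matrix.mul_apply]
  have hterm : ∀ m, ((Wm p q (L+1))^j) r m * (Rtop p q L * (Ntop p q L)^k) m c
      = wt p q (c (Fin.last L)) * (((Wm p q (L+1))^j) r m
          * ((Rm p q L * (Nm p q L)^k)) (Fin.init m) (Fin.init c)) := by
    intro m
    rw [RtopNtop_pow]
    ring
  rw [Finset.sum_congr rfl fun m _ => hterm m, ← Finset.mul_sum,
    marg hpq j r (fun g => ((Rm p q L * (Nm p q L)^k)) g (Fin.init c)), Matrix.mul_apply]

lemma Wm_zero_pow : ∀ (τ : ℕ) (r c : Fin 0 → Bool), ((Wm p q 0)^τ) r c = 1 := by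
  intro τ
  induction τ with
  | zero =>
    intro r c
    rw [pow_zero, Matrix.one_apply, if_pos (Subsingleton.elim r c)]
  | succ τ ih =>
    intro r c
    rw [pow_succ, Matrix.mul_apply]
    have h1 : ∀ m : Fin 0 → Bool, ((Wm p q 0)^τ) r m * Wm p q 0 m c = 1 := fun m => by
      rw [ih r m, one_mul, Wm, Matrix.of_apply, avK_of_ge' p q (lt_irrefl 0),
        if_pos (Subsingleton.elim m c)]
    rw [Finset.sum_congr rfl fun m _ => h1 m]
    simp

/-- MAIN freshness theorem: after at least `L` steps the configuration is exactly
Bernoulli-product distributed, for every initial configuration. -/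
theorem fresh (hpq : p + q = 1) (hp : 0 ≤ p) (hq : 0 ≤ q) :
    ∀ L τ, L ≤ τ → ∀ r c : Fin L → Bool, ((Wm p q L)^τ) r c = psiprod p q c
  | 0, τ, _, r, c => by
    rw [Wm_zero_pow]
    simp [psiprod]
  | (L+1), τ, hτ, r, c => by
    have htel := telescope (n := τ) (Rtop p q L) (Ntop p q L)
    rw [← Wm_succ_eq_add] at htel
    rw [htel, Matrix.add_apply, Ntop_pow, Nm_pow_eq_zero hp hq (by omega),
      Matrix.zero_apply, mul_zero, zero_add, Matrix.sum_apply]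
    have hterm : ∀ j ∈ Finset.range τ,
        ((Wm p q (L+1))^j * Rtop p q L * (Ntop p q L)^(τ-1-j)) r c
          = wt p q (c (Fin.last L))
            * (((Wm p q L)^j * Rm p q L * (Nm p q L)^(τ-1-j))) (Fin.init r) (Fin.init c) := by
      intro j hj
      rw [mul_assoc, term_eq hpq, ← mul_assoc]
    rw [Finset.sum_congr rfl hterm, ← Finset.mul_sum, ← Matrix.sum_apply]
    have htel2 := telescope (n := τ) (Rm p q L) (Nm p q L)
    rw [← Wm_eq_add] at htel2
    have hsum : (∑ j ∈ Finset.range τ, (Wm p q L)^j * Rm p q L * (Nm p q L)^(τ-1-j))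
        = (Wm p q L)^τ := by
      rw [Nm_pow_eq_zero hp hq (show L + 1 ≤ τ by omega)] at htel2
      · rw [htel2]; simp
    rw [hsum, fresh hpq hp hq L τ (by omega) (Fin.init r) (Fin.init c)]
    conv_rhs => rw [← Fin.snoc_init_self c]
    rw [psiprod_snoc]
    ring

end DSSProof2


namespace DSSBridge
open DSS DSSProof DSSProof2 DSSBridge

variable {L : ℕ} {p q : ℝ}

/-- the z-part of the potential -/
def zpot (z : Fin L → Bool) : ℕ := ∑ x : Fin L, (if z x then L + 1 - x.val else 0)

def wpot (w : Multiset (Fin L)) : ℕ := (w.map fun x => L + 1 - x.val).sum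

lemma potential_eq (s : State L) : potential s = wpot s.w + zpot s.z := rfl

lemma zpot_update (z : Fin L → Bool) (x : Fin L) (b : Bool) :
    zpot (Function.update z x b) + (if z x then L + 1 - x.val else 0)
      = zpot z + (if b then L + 1 - x.val else 0) := by
  have h : (fun y => if Function.update z x b y then (L + 1 - y.val) else 0)
      = Function.update (fun y => if z y then (L + 1 - y.val) else 0) x
          (if b then L + 1 - x.val else 0) := by
    funext y
    rcases eq_or_ne y x with rfl | hy
    · simp
    · simp [Function.update_of_ne hy]
  rw [zpot, h, Finset.sum_update_of_mem (Finset.mem_univ x)]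
  rw [zpot, ← Finset.add_sum_erase _ _ (Finset.mem_univ x), Finset.erase_eq]
  ring

lemma wpot_succSite (x : Fin L) : wpot (succSite L x) ≤ L - x.val := by
  rw [succSite]
  split
  · simp only [wpot, Multiset.map_singleton, Multiset.sum_singleton]
    omega
  · simp [wpot]

lemma card_succSite (x : Fin L) : Multiset.card (succSite L x) ≤ 1 := by
  rw [succSite]; split <;> simp

lemma wpot_add (w w' : Multiset (Fin L)) : wpot (w + w') = wpot w + wpot w' := by
  simp [wpot]

lemma wpot_erase {w : Multiset (Fin L)} {x : Fin L} (hx : x ∈ w) :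
    wpot (w.erase x) + (L + 1 - x.val) = wpot w := by
  conv_rhs => rw [← Multiset.cons_erase hx]
  simp [wpot, add_comm]

lemma fuel_topple (s : State L) (x : Fin L) (hz : s.z x = true) :
    fuel (topple s x) < fuel s := by
  have h1 := zpot_update s.z x false
  rw [hz] at h1
  have h2 := wpot_succSite x
  have h3 := card_succSite x
  have h4 : x.val < L := x.isLt
  have h5 : fuel (topple s x) = 2 * (wpot s.w + wpot (succSite L x) + zpot (Function.update s.z x false))
      + (Multiset.card s.w + Multiset.card (succSite L x)) := by
    simp [fuel, topple, potential_eq, wpot_add]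
  have h1' : zpot (Function.update s.z x false) + (L + 1 - x.val) = zpot s.z := by
    simpa using h1
  rw [h5, fuel, potential_eq]
  omega

lemma fuel_settle (s : State L) (x : Fin L) (hz : s.z x = false) (hx : x ∈ s.w) :
    fuel (settle s x) < fuel s := by
  have h1 := zpot_update s.z x true
  rw [hz] at h1
  have h2 := wpot_erase hx
  have h4 : x.val < L := x.isLt
  have h5 : fuel (settle s x) = 2 * (wpot (s.w.erase x) + zpot (Function.update s.z x true))
      + Multiset.card (s.w.erase x) := by
    simp [fuel, settle, potential_eq]
  have h6 : Multiset.card (s.w.erase x) + 1 = Multiset.card s.w := by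
    rw [← Multiset.cons_erase hx]; simp
  have h1' : zpot (Function.update s.z x true) = zpot s.z + (L + 1 - x.val) := by
    simpa using h1
  rw [h5, fuel, potential_eq]
  omega

lemma fuel_jump (s : State L) (x : Fin L) (hx : x ∈ s.w) :
    fuel (jump s x) < fuel s := by
  have h2 := wpot_erase hx
  have h3 := card_succSite x
  have h2' := wpot_succSite x
  have h4 : x.val < L := x.isLt
  have h6 : Multiset.card (s.w.erase x) + 1 = Multiset.card s.w := by
    rw [← Multiset.cons_erase hx]; simp
  have h5 : fuel (jump s x) = 2 * (wpot (s.w.erase x) + wpot (succSite L x) + zpot s.z)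
      + (Multiset.card (s.w.erase x) + Multiset.card (succSite L x)) := by
    simp [fuel, jump, potential_eq, wpot_add]
  rw [h5, fuel, potential_eq]
  omega

lemma minRule_mem {s : State L} {x : Fin L} (h : minRule s = some x) : x ∈ s.w := by
  rw [minRule] at h
  split at h
  · simp at h
  · rw [Option.some_inj] at h
    rw [← h]
    exact Multiset.mem_toFinset.mp (Finset.min'_mem _ _)

lemma minRule_none {s : State L} (h : minRule s = none) : s.w = 0 := by
  rw [minRule] at h
  split at h
  · assumption
  · simp at h

end DSSBridge

namespace DSSBridge
open DSS DSSProof DSSProof2 DSSBridge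
variable {L : ℕ} {p q : ℝ}

lemma stab_step (p q : ℝ) :
    ∀ n (s : State L) (c : Fin L → Bool), fuel s ≤ n →
      stabilizeAux p q minRule (n+1) s c = stabilizeAux p q minRule n s c
  | 0, s, c, hn => by
    have hw : s.w = 0 := by
      have h0 := Nat.le_zero.mp hn
      rw [fuel] at h0
      have : Multiset.card s.w = 0 := by omega
      exact Multiset.card_eq_zero.mp this
    have hmr : minRule s = none := by rw [minRule, dif_pos hw]
    rw [stabilizeAux, stabilizeAux, hmr]
    simp [hw]
  | (m+1), s, c, hn => by
    rw [stabilizeAux, stabilizeAux]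
    rcases hmr : minRule s with _ | x
    · simp
    · simp only
      have hx := minRule_mem hmr
      by_cases hz : s.z x
      · rw [if_pos hz, if_pos hz]
        exact stab_step p q m (topple s x) c (by have := fuel_topple s x hz; omega)
      · rw [if_neg hz, if_neg hz,
          stab_step p q m (settle s x) c (by
            have := fuel_settle s x (by simpa using hz) hx; omega),
          stab_step p q m (jump s x) c (by have := fuel_jump s x hx; omega)]
  termination_by n => n

lemma stab_ge (p q : ℝ) (s : State L) (c : Fin L → Bool) :
    ∀ n, fuel s ≤ n → stabilizeAux p q minRule n s c = stabilizeAux p q minRule (fuel s) s c := by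
  intro n hn
  induction n with
  | zero => rw [Nat.le_zero.mp hn]
  | succ n ih =>
    rcases Nat.lt_or_ge (fuel s) (n+1) with h | h
    · rw [stab_step p q n s c (by omega), ih (by omega)]
    · have : fuel s = n + 1 := by omega
      rw [this]

/-- the stabilization probability -/
noncomputable def Pinf (p q : ℝ) (s : State L) (c : Fin L → Bool) : ℝ :=
  stabilizeAux p q minRule (fuel s) s c

lemma Pinf_none {s : State L} (h : minRule s = none) (c : Fin L → Bool) :
    Pinf p q s c = (if s.z = c then 1 else 0) := by
  rw [Pinf, ← stab_ge p q s c (fuel s + 1) (by omega), stabilizeAux, h]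

lemma fuel_pos {s : State L} {x : Fin L} (h : minRule s = some x) : 1 ≤ fuel s := by
  have hx := minRule_mem h
  have : Multiset.card s.w ≠ 0 := by
    intro h0
    rw [Multiset.card_eq_zero.mp h0] at hx
    simp at hx
  rw [fuel]
  omega

lemma Pinf_topple {s : State L} {x : Fin L} (h : minRule s = some x) (hz : s.z x = true)
    (c : Fin L → Bool) : Pinf p q s c = Pinf p q (topple s x) c := by
  have hf := fuel_topple s x hz
  obtain ⟨k, hk⟩ : ∃ k, fuel s = k + 1 := ⟨fuel s - 1, by have := fuel_pos h; omega⟩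
  rw [Pinf, hk, stabilizeAux, h]
  simp only [hz, if_true]
  rw [stab_ge p q _ c k (by omega), Pinf]

lemma Pinf_branch {s : State L} {x : Fin L} (h : minRule s = some x) (hz : s.z x = false)
    (c : Fin L → Bool) :
    Pinf p q s c = p * Pinf p q (settle s x) c + q * Pinf p q (jump s x) c := by
  have hfs := fuel_settle s x hz (minRule_mem h)
  have hfj := fuel_jump s x (minRule_mem h)
  obtain ⟨k, hk⟩ : ∃ k, fuel s = k + 1 := ⟨fuel s - 1, by have := fuel_pos h; omega⟩
  rw [Pinf, hk, stabilizeAux, h]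
  simp only [hz, Bool.false_eq_true, if_false]
  rw [stab_ge p q _ c k (by omega), stab_ge p q _ c k (by omega)]
  rfl

end DSSBridge


namespace DSSBridge
open DSS DSSProof DSSProof2
variable {L : ℕ} {p q : ℝ}

def wOf (L : ℕ) (x : ℕ) (a : ℕ) : Multiset (Fin L) :=
  if h : x < L then Multiset.replicate a ⟨x, h⟩ else 0

lemma smul_succSite {x : ℕ} (h : x < L) (n : ℕ) :
    n • succSite L ⟨x, h⟩ = wOf L (x+1) n := by
  rw [succSite, wOf]
  by_cases h1 : x + 1 < L
  · rw [dif_pos h1, dif_pos h1, ← Multiset.replicate_one, Multiset.nsmul_replicate, mul_one]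
  · rw [dif_neg h1, dif_neg h1, smul_zero]

lemma minRule_state {x : ℕ} (h : x < L) (a m : ℕ) (z : Fin L → Bool) :
    minRule (⟨z, Multiset.replicate (a+1) ⟨x,h⟩ + m • succSite L ⟨x,h⟩⟩ : State L)
      = some ⟨x,h⟩ := by
  have hmem : (⟨x,h⟩ : Fin L) ∈ Multiset.replicate (a+1) (⟨x,h⟩ : Fin L) + m • succSite L ⟨x,h⟩ := by
    rw [Multiset.mem_add]
    exact Or.inl (Multiset.mem_replicate.mpr ⟨Nat.succ_ne_zero a, rfl⟩)
  have hle : ∀ y ∈ Multiset.replicate (a+1) (⟨x,h⟩ : Fin L) + m • succSite L ⟨x,h⟩,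
      (⟨x,h⟩ : Fin L) ≤ y := by
    intro y hy
    rw [Multiset.mem_add] at hy
    rcases hy with hy | hy
    · rw [Multiset.eq_of_mem_replicate hy]
    · have hy' : y ∈ succSite L ⟨x,h⟩ := by
        rcases Nat.eq_zero_or_pos m with rfl | hm
        · simp at hy
        · exact (Multiset.mem_nsmul.mp hy).2
      rw [succSite] at hy'
      split at hy'
      · rw [Multiset.mem_singleton] at hy'
        subst hy'
        exact le_of_lt (by simp [Fin.lt_def])
      · simp at hy'
  rw [minRule]
  have hw0 : (Multiset.replicate (a+1) (⟨x,h⟩ : Fin L) + m • succSite L ⟨x,h⟩) ≠ 0 :=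
    fun h0 => by rw [h0] at hmem; simp at hmem
  rw [dif_neg (by exact hw0)]
  congr 1
  refine le_antisymm (Finset.min'_le _ _ (Multiset.mem_toFinset.mpr hmem)) ?_
  exact Finset.le_min' _ _ _ (fun y hy => hle y (Multiset.mem_toFinset.mp hy))

lemma erase_state {x : ℕ} (h : x < L) (a m : ℕ) :
    (Multiset.replicate (a+1) (⟨x,h⟩ : Fin L) + m • succSite L ⟨x,h⟩).erase ⟨x,h⟩
      = Multiset.replicate a ⟨x,h⟩ + m • succSite L ⟨x,h⟩ := by
  rw [Multiset.replicate_succ, Multiset.cons_add, Multiset.erase_cons_head]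

lemma settle_state {x : ℕ} (h : x < L) (a m : ℕ) (z : Fin L → Bool) :
    settle (⟨z, Multiset.replicate (a+1) ⟨x,h⟩ + m • succSite L ⟨x,h⟩⟩ : State L) ⟨x,h⟩
      = ⟨Function.update z ⟨x,h⟩ true, Multiset.replicate a ⟨x,h⟩ + m • succSite L ⟨x,h⟩⟩ := by
  rw [settle]
  simp only
  rw [erase_state h a m]

lemma jump_state {x : ℕ} (h : x < L) (a m : ℕ) (z : Fin L → Bool) :
    jump (⟨z, Multiset.replicate (a+1) ⟨x,h⟩ + m • succSite L ⟨x,h⟩⟩ : State L) ⟨x,h⟩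
      = ⟨z, Multiset.replicate a ⟨x,h⟩ + (m+1) • succSite L ⟨x,h⟩⟩ := by
  rw [jump]
  simp only
  rw [erase_state h a m, add_assoc, ← succ_nsmul]

lemma topple_state {x : ℕ} (h : x < L) (a m : ℕ) (z : Fin L → Bool) :
    topple (⟨z, Multiset.replicate a ⟨x,h⟩ + m • succSite L ⟨x,h⟩⟩ : State L) ⟨x,h⟩
      = ⟨Function.update z ⟨x,h⟩ false,
          Multiset.replicate a ⟨x,h⟩ + (m+1) • succSite L ⟨x,h⟩⟩ := by
  rw [topple]
  simp only
  rw [add_assoc, ← succ_nsmul]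

/-- per-site collapse, empty-site version: processing all `a+1` particles at site `x`
(currently empty) in one shot. -/
lemma collapseF (hpq : p + q = 1) {x : ℕ} (h : x < L) :
    ∀ a m (z c : Fin L → Bool), z ⟨x,h⟩ = false →
      Pinf p q ⟨z, Multiset.replicate (a+1) ⟨x,h⟩ + m • succSite L ⟨x,h⟩⟩ c
        = p * Pinf p q ⟨Function.update z ⟨x,h⟩ true, (m + a) • succSite L ⟨x,h⟩⟩ c
          + q * Pinf p q ⟨Function.update z ⟨x,h⟩ false, (m + a + 1) • succSite L ⟨x,h⟩⟩ c
  | 0, m, z, c, hz => by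
    rw [Pinf_branch (minRule_state h 0 m z) (by exact hz) c, settle_state h 0 m z,
      jump_state h 0 m z,
      show Multiset.replicate 0 (⟨x,h⟩ : Fin L) + m • succSite L ⟨x,h⟩
          = (m + 0) • succSite L ⟨x,h⟩ from by simp,
      show Multiset.replicate 0 (⟨x,h⟩ : Fin L) + (m+1) • succSite L ⟨x,h⟩
          = (m + 0 + 1) • succSite L ⟨x,h⟩ from by simp,
      show Function.update z ⟨x,h⟩ false = z from by rw [← hz, Function.update_eq_self]]
  | (a'+1), m, z, c, hz => by
    rw [Pinf_branch (minRule_state h (a'+1) m z) (by exact hz) c, settle_state h (a'+1) m z,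
      jump_state h (a'+1) m z,
      Pinf_topple (minRule_state h a' m (Function.update z ⟨x,h⟩ true))
        (Function.update_self _ _ _) c,
      topple_state h (a'+1) m (Function.update z ⟨x,h⟩ true),
      show Function.update (Function.update z ⟨x,h⟩ true) ⟨x,h⟩ false = z from by
        rw [Function.update_idem, ← hz, Function.update_eq_self],
      collapseF hpq h a' (m+1) z c hz,
      show m + 1 + a' = m + (a'+1) from by ring]
    set X := Pinf p q (⟨Function.update z ⟨x,h⟩ true,
      (m + (a'+1)) • succSite L ⟨x,h⟩⟩ : State L) c with hX
    set Y := Pinf p q (⟨Function.update z ⟨x,h⟩ false,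
      (m + (a'+1) + 1) • succSite L ⟨x,h⟩⟩ : State L) c with hY
    linear_combination (p * X + q * Y) * hpq

/-- per-site collapse, general version. -/
lemma collapse (hpq : p + q = 1) {x : ℕ} (h : x < L) (a m : ℕ) (z c : Fin L → Bool) :
    Pinf p q ⟨z, Multiset.replicate (a+1) ⟨x,h⟩ + m • succSite L ⟨x,h⟩⟩ c
      = p * Pinf p q ⟨Function.update z ⟨x,h⟩ true,
            (m + a + (if z ⟨x,h⟩ then 1 else 0)) • succSite L ⟨x,h⟩⟩ c
        + q * Pinf p q ⟨Function.update z ⟨x,h⟩ false,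
            (m + a + 1 + (if z ⟨x,h⟩ then 1 else 0)) • succSite L ⟨x,h⟩⟩ c := by
  by_cases hz : z ⟨x,h⟩
  · rw [Pinf_topple (minRule_state h a m z) (by exact hz) c,
      topple_state h (a+1) m z,
      collapseF hpq h a (m+1) (Function.update z ⟨x,h⟩ false) c (Function.update_self _ _ _),
      Function.update_idem, Function.update_idem, hz]
    simp only [if_true]
    rw [show m + 1 + a = m + a + 1 from by ring]
  · have hz' : z ⟨x,h⟩ = false := by simpa using hz
    rw [collapseF hpq h a m z c hz', hz']
    simp only [Bool.false_eq_true, if_false]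
    rw [show m + a + 0 = m + a from by ring, show m + a + 1 + 0 = m + a + 1 from by ring]

/-- the bridge: the multiset stabilization probability equals `avK`. -/
lemma bridge (hpq : p + q = 1) : ∀ x a (z c : Fin L → Bool),
    Pinf p q ⟨z, wOf L x a⟩ c = avK p q x a z c
  | x, a, z, c => by
    by_cases h : x < L
    · rcases a with _ | a'
      · rw [show wOf L x 0 = 0 from by rw [wOf]; split <;> simp,
          Pinf_none (by rw [minRule]; simp) c, avK_zero']
      · have hc := collapse hpq h a' 0 z c
        rw [show Multiset.replicate (a'+1) (⟨x,h⟩ : Fin L) + (0:ℕ) • succSite L ⟨x,h⟩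
            = wOf L x (a'+1) from by rw [wOf, dif_pos h]; simp] at hc
        have e1 : 0 + a' + (if z ⟨x,h⟩ then 1 else 0)
            = a' + 1 + (if z ⟨x,h⟩ then 1 else 0) - 1 := by split <;> omega
        have e2 : 0 + a' + 1 + (if z ⟨x,h⟩ then 1 else 0)
            = a' + 1 + (if z ⟨x,h⟩ then 1 else 0) := by split <;> omega
        rw [hc, smul_succSite h, smul_succSite h,
          bridge hpq (x+1) _ _ c, bridge hpq (x+1) _ _ c, e1, e2,
          ← avK_succ' p q h (Nat.succ_ne_zero a')]
    · rw [show wOf L x a = 0 from dif_neg h, Pinf_none (by rw [minRule]; simp) c,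
        avK_of_ge' p q h]
  termination_by x => L - x
  decreasing_by all_goals omega

/-- `Wmat` is `Wm`. -/
lemma Wmat_eq_Wm (hL : 0 < L) (hpq : p + q = 1) : Wmat p q L = Wm p q L := by
  ext r c
  rw [Wmat, Matrix.of_apply, Wker, Wm, Matrix.of_apply, ← bridge hpq 0 1 r c]
  rw [show addGrain r = (⟨r, wOf L 0 1⟩ : State L) from by
    rw [addGrain, wOf]
    simp only [dif_pos hL]
    rw [Multiset.replicate_one]]
  rfl

end DSSBridge


namespace DSSBridge
open DSS DSSProof DSSProof2
variable {L : ℕ} {p q : ℝ}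

lemma psi_eq_psiprod (r : Fin L → Bool) : psi p q r = psiprod p q r := by
  rw [psi, psiprod]
  have h1 : ∀ x : Fin L, wt p q (r x) = if r x = true then p else q := fun x => rfl
  rw [Finset.prod_congr rfl (fun x _ => h1 x), Finset.prod_ite, Finset.prod_const,
    Finset.prod_const]
  congr 1
  have h2 := Finset.card_filter_add_card_filter_not
    (s := (Finset.univ : Finset (Fin L))) (p := fun x => r x = true)
  rw [Finset.card_univ, Fintype.card_fin] at h2
  congr 1
  omega

lemma sum_psi (hpq : p + q = 1) : ∑ r : Fin L → Bool, psi p q r = 1 := by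
  rw [Finset.sum_congr rfl (fun r _ => psi_eq_psiprod r), sum_psiprod hpq L]

/-- key fact : for `τ ≥ L` the `τ`-step kernel forgets the initial configuration. -/
lemma Wmat_pow_fresh (hL : 0 < L) (hp : 0 < p) (hq : 0 < q) (hpq : p + q = 1)
    {τ : ℕ} (hτ : L ≤ τ) (r c : Fin L → Bool) :
    ((Wmat p q L)^τ) r c = psi p q c := by
  rw [Wmat_eq_Wm hL hpq, fresh hpq hp.le hq.le L τ hτ r c, psi_eq_psiprod]

end DSSBridge

/-- finite-time decorrelation of scalar observables. For any
`A : {0,1}^L → ℝ`, any `t ≥ 0` and any `τ ≥ L`, in the stationary process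
`E[A(z^t) A(z^{t+τ})] = E[A(z^t)] E[A(z^{t+τ})]`. -/
theorem scalar_observables_decorrelate
    (L : ℕ) (hL : 0 < L) (p q : ℝ) (hp : 0 < p) (hq : 0 < q) (hpq : p + q = 1)
    (A : (Fin L → Bool) → ℝ) (t τ : ℕ) (hτ : L ≤ τ) :
    (∑ r0 : Fin L → Bool, ∑ r1 : Fin L → Bool, ∑ r2 : Fin L → Bool,
        psi p q r0 * ((Wmat p q L) ^ t) r0 r1 * A r1 * ((Wmat p q L) ^ τ) r1 r2 * A r2)
      =
    (∑ r0 : Fin L → Bool, ∑ r1 : Fin L → Bool,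
        psi p q r0 * ((Wmat p q L) ^ t) r0 r1 * A r1) *
    (∑ r0 : Fin L → Bool, ∑ r1 : Fin L → Bool,
        psi p q r0 * ((Wmat p q L) ^ (t + τ)) r0 r1 * A r1) := by
  have hW : ∀ (τ' : ℕ), L ≤ τ' → ∀ r c : Fin L → Bool,
      ((Wmat p q L)^τ') r c = psi p q c :=
    fun τ' hτ' r c => DSSBridge.Wmat_pow_fresh hL hp hq hpq hτ' r c
  have hpsisum : ∑ r : Fin L → Bool, psi p q r = 1 := DSSBridge.sum_psi hpq
  set C := ∑ r2 : Fin L → Bool, psi p q r2 * A r2 with hC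
  have hLHS : (∑ r0 : Fin L → Bool, ∑ r1 : Fin L → Bool, ∑ r2 : Fin L → Bool,
        psi p q r0 * ((Wmat p q L) ^ t) r0 r1 * A r1 * ((Wmat p q L) ^ τ) r1 r2 * A r2)
      = (∑ r0 : Fin L → Bool, ∑ r1 : Fin L → Bool,
          psi p q r0 * ((Wmat p q L) ^ t) r0 r1 * A r1) * C := by
    rw [Finset.sum_mul]
    refine Finset.sum_congr rfl fun r0 _ => ?_
    rw [Finset.sum_mul]
    refine Finset.sum_congr rfl fun r1 _ => ?_
    rw [hC, Finset.mul_sum]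
    refine Finset.sum_congr rfl fun r2 _ => ?_
    rw [hW τ hτ r1 r2]
    ring
  have hsecond : (∑ r0 : Fin L → Bool, ∑ r1 : Fin L → Bool,
      psi p q r0 * ((Wmat p q L) ^ (t + τ)) r0 r1 * A r1) = C := by
    have h1 : ∀ r0 r1 : Fin L → Bool, ((Wmat p q L) ^ (t + τ)) r0 r1 = psi p q r1 :=
      fun r0 r1 => hW (t + τ) (by omega) r0 r1
    calc (∑ r0 : Fin L → Bool, ∑ r1 : Fin L → Bool,
          psi p q r0 * ((Wmat p q L) ^ (t + τ)) r0 r1 * A r1)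
        = ∑ r0 : Fin L → Bool, psi p q r0 * C := by
          refine Finset.sum_congr rfl fun r0 _ => ?_
          rw [hC, Finset.mul_sum]
          refine Finset.sum_congr rfl fun r1 _ => ?_
          rw [h1 r0 r1]
          ring
      _ = C := by rw [← Finset.sum_mul, hpsisum, one_mul]
  rw [hLHS, hsecond]

end DSS
end
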